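/- arXiv:2511.20485 — 4 statements merged into one kernel-verified Lean document; each statement's English description precedes it below -/
import Mathlib

section
/- For each fixed 0 < p ≤ ∞ there exist constants c, C > 0 such that for all n ∈ ℤ, c · e^{(n + 2/p)²/(4α)} ≤ ‖z^n‖_{F^p_α} ≤ C · e^{(n + 2/p)²/(4α)} (with the convention 2/p = 0 when p = ∞). -/
open Complex MeasureTheory

/-- The `F^p_α` norm (0 < p < ∞) of a function on `ℂ \ {0}`. -/
noncomputable def fockPNorm (α p : ℝ) (f : ℂ → ℂ) : ℝ :=
  (∫ z : ℂ, ‖f z‖ ^ p * Real.exp (-(p * α) * (Real.log (‖z‖)) ^ 2)) ^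
    (1 / p)

open Real Set in
/-- Gaussian integral with a linear term. -/
lemma gauss_lin (b c : ℝ) (hb : 0 < b) :
    ∫ t : ℝ, Real.exp (-b * t ^ 2 + c * t) = Real.sqrt (π / b) * Real.exp (c ^ 2 / (4 * b)) := by
  have h : ∀ t : ℝ, -b * t ^ 2 + c * t = -b * (t - c / (2 * b)) ^ 2 + c ^ 2 / (4 * b) := by
    intro t; field_simp; ring
  simp_rw [h, Real.exp_add]
  rw [integral_mul_const,
    MeasureTheory.integral_sub_right_eq_self (fun t => Real.exp (-b * t ^ 2)) (c / (2 * b)),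
    integral_gaussian]

open Real Set in
/-- Polar coordinates for radial functions on `ℂ`. -/
lemma integral_comp_cabs (f : ℝ → ℝ) :
    ∫ z : ℂ, f (‖z‖) = 2 * π * ∫ x in Ioi (0 : ℝ), x * f x := by
  calc ∫ z : ℂ, f (‖z‖)
      = ∫ x in Ioi (0 : ℝ) ×ˢ Ioo (-π) π, x.1 * f |x.1| := by
        rw [← Complex.integral_comp_polarCoord_symm, polarCoord_target]
        simp_rw [Complex.norm_polarCoord_symm, smul_eq_mul]
    _ = (∫ x in Ioi (0 : ℝ), x * f |x|) * ∫ _ in Ioo (-π) π, (1 : ℝ) := by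
        rw [Measure.volume_eq_prod, ← setIntegral_prod_mul]
        simp_rw [mul_one]
    _ = 2 * π * ∫ x in Ioi (0 : ℝ), x * f x := by
        simp_rw [integral_const, Measure.real, Measure.restrict_apply MeasurableSet.univ, Set.univ_inter,
          volume_Ioo, sub_neg_eq_add, ← two_mul, ENNReal.toReal_ofReal (by positivity : 0 ≤ 2 * π),
          smul_eq_mul, mul_one]
        rw [mul_comm]
        congr 1
        refine setIntegral_congr_fun measurableSet_Ioi fun x hx => ?_
        rw [abs_of_pos hx]

open Real Set in
/-- Substitution `x = exp t` on `(0, ∞)`. -/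
lemma integral_Ioi_comp_exp (g : ℝ → ℝ) :
    ∫ x in Ioi (0 : ℝ), g x = ∫ t : ℝ, Real.exp t * g (Real.exp t) := by
  have h := MeasureTheory.integral_image_eq_integral_abs_deriv_smul MeasurableSet.univ
    (fun x _ => (Real.hasDerivAt_exp x).hasDerivWithinAt)
    (Real.exp_injective.injOn) g
  rw [Set.image_univ, Real.range_exp, Measure.restrict_univ] at h
  simpa [abs_of_pos (Real.exp_pos _)] using h

open Real in
/-- Exact value of the `F^p_α` norm of `z ^ n`. -/
lemma fockPNorm_zpow (α p : ℝ) (hα : 0 < α) (hp : 0 < p) (n : ℤ) :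
    fockPNorm α p (fun z => z ^ n) =
      (2 * π * Real.sqrt (π / (p * α))) ^ (1 / p) *
        Real.exp (((n : ℝ) + 2 / p) ^ 2 / (4 * α)) := by
  have hpα : 0 < p * α := mul_pos hp hα
  unfold fockPNorm
  have h1 : ∀ z : ℂ, ‖z ^ n‖ ^ p *
      Real.exp (-(p * α) * (Real.log (‖z‖)) ^ 2) =
      (fun r : ℝ => r ^ ((n : ℝ) * p) * Real.exp (-(p * α) * (Real.log r) ^ 2))
        (‖z‖) := by
    intro z
    congr 1
    rw [Real.rpow_mul (norm_nonneg z), Real.rpow_intCast, norm_zpow]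
  simp_rw [h1]
  rw [show (∫ z : ℂ, ‖z‖ ^ ((n : ℝ) * p) *
        Real.exp (-(p * α) * (Real.log (‖z‖)) ^ 2)) = _ from
      integral_comp_cabs fun r => r ^ ((n : ℝ) * p) * Real.exp (-(p * α) * (Real.log r) ^ 2)]
  rw [integral_Ioi_comp_exp (fun x => x * (x ^ ((n : ℝ) * p) * Real.exp (-(p * α) * (Real.log x) ^ 2)))]
  have h2 : ∀ t : ℝ, Real.exp t * (Real.exp t * (Real.exp t ^ ((n : ℝ) * p) *
      Real.exp (-(p * α) * (Real.log (Real.exp t)) ^ 2))) =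
      Real.exp (-(p * α) * t ^ 2 + ((n : ℝ) * p + 2) * t) := by
    intro t
    rw [Real.log_exp, Real.rpow_def_of_pos (Real.exp_pos t), Real.log_exp,
      ← Real.exp_add, ← Real.exp_add, ← Real.exp_add]
    ring_nf
  simp_rw [h2]
  rw [gauss_lin (p * α) ((n : ℝ) * p + 2) hpα]
  rw [← mul_assoc]
  rw [Real.mul_rpow (by positivity) (Real.exp_nonneg _)]
  congr 1
  rw [← Real.exp_log (Real.exp_pos (((n : ℝ) * p + 2) ^ 2 / (4 * (p * α)))),
    Real.log_exp, ← Real.exp_mul]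
  congr 1
  rw [show ((n:ℝ) + 2/p) = ((n:ℝ)*p + 2)/p by
      rw [eq_div_iff hp.ne', add_mul, div_mul_cancel₀ _ hp.ne'], div_pow]
  rw [mul_one_div, div_div, div_div]
  congr 1
  ring

theorem stmt3 (α : ℝ) (hα : 0 < α) :
    (∀ p : ℝ, 0 < p → ∃ c C : ℝ, 0 < c ∧ 0 < C ∧ ∀ n : ℤ,
        c * Real.exp (((n : ℝ) + 2 / p) ^ 2 / (4 * α)) ≤
          fockPNorm α p (fun z => z ^ n) ∧
        fockPNorm α p (fun z => z ^ n) ≤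
          C * Real.exp (((n : ℝ) + 2 / p) ^ 2 / (4 * α))) ∧
    (∃ c C : ℝ, 0 < c ∧ 0 < C ∧ ∀ n : ℤ,
        (∀ z : ℂ, z ≠ 0 →
          ‖z ^ n‖ * Real.exp (-α * (Real.log (‖z‖)) ^ 2) ≤
            C * Real.exp ((n : ℝ) ^ 2 / (4 * α))) ∧
        (∃ z : ℂ, z ≠ 0 ∧
          c * Real.exp ((n : ℝ) ^ 2 / (4 * α)) ≤
            ‖z ^ n‖ * Real.exp (-α * (Real.log (‖z‖)) ^ 2))) := by
  constructor
  · intro p hp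
    refine ⟨(2 * Real.pi * Real.sqrt (Real.pi / (p * α))) ^ (1 / p),
      (2 * Real.pi * Real.sqrt (Real.pi / (p * α))) ^ (1 / p), ?_, ?_, fun n => ?_⟩
    · apply Real.rpow_pos_of_pos
      have : 0 < Real.sqrt (Real.pi / (p * α)) :=
        Real.sqrt_pos.mpr (div_pos Real.pi_pos (mul_pos hp hα))
      positivity
    · apply Real.rpow_pos_of_pos
      have : 0 < Real.sqrt (Real.pi / (p * α)) :=
        Real.sqrt_pos.mpr (div_pos Real.pi_pos (mul_pos hp hα))
      positivity
    · rw [fockPNorm_zpow α p hα hp n]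
      exact ⟨le_refl _, le_refl _⟩
  · refine ⟨1, 1, one_pos, one_pos, fun n => ?_⟩
    constructor
    · intro z hz
      have habs : 0 < ‖z‖ := norm_pos_iff.mpr hz
      set t := Real.log (‖z‖) with ht
      have h1 : ‖z ^ n‖ = Real.exp ((n : ℝ) * t) := by
        rw [norm_zpow, ← Real.rpow_intCast, Real.rpow_def_of_pos habs, ← ht, mul_comm]
      rw [h1, ← Real.exp_add, one_mul]
      apply Real.exp_le_exp.mpr
      rw [le_div_iff₀ (by positivity : (0:ℝ) < 4 * α)]
      nlinarith [sq_nonneg (2 * α * t - (n : ℝ)), hα]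
    · refine ⟨((Real.exp ((n : ℝ) / (2 * α)) : ℝ) : ℂ),
        Complex.ofReal_ne_zero.mpr (Real.exp_ne_zero _), ?_⟩
      have habs : ‖((Real.exp ((n : ℝ) / (2 * α)) : ℝ) : ℂ)‖ =
          Real.exp ((n : ℝ) / (2 * α)) := by
        rw [Complex.norm_real, Real.norm_eq_abs, abs_of_pos (Real.exp_pos _)]
      rw [norm_zpow, habs, ← Real.rpow_intCast, Real.rpow_def_of_pos (Real.exp_pos _),
        Real.log_exp, ← Real.exp_add, one_mul]
      apply Real.exp_le_exp.mpr
      have hα' : α ≠ 0 := ne_of_gt hα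
      apply le_of_eq
      field_simp
      ring
end

section
/- If g is entire, g(0) ≠ 0, and |g(z)| ≤ e^{α x²} for all z = x + iy ∈ ℂ, then limsup_{R→∞} (1/R²) ∫_0^R n(t)/t dt ≤ α/2, where n(t) counts zeros of g in the disk of radius t (with multiplicity). -/
set_option maxHeartbeats 1000000

open Complex Filter MeasureTheory

/-- `g` vanishes at `z` to order exactly `m`. -/
def hasZeroOrder (g : ℂ → ℂ) (z : ℂ) (m : ℕ) : Prop :=
  ∃ h : ℂ → ℂ, AnalyticAt ℂ h z ∧ h z ≠ 0 ∧ ∀ᶠ w in nhds z, g w = (w - z) ^ m * h w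

open Classical in
/-- The order (multiplicity) of the zero of `g` at `z` (junk value `0` if none exists). -/
noncomputable def zeroOrder (g : ℂ → ℂ) (z : ℂ) : ℕ :=
  if h : ∃ m, hasZeroOrder g z m then h.choose else 0

/-- The number of zeros of `g` in the closed disk of radius `t`, counted with multiplicity. -/
noncomputable def zeroCounting (g : ℂ → ℂ) (t : ℝ) : ℝ :=
  ∑' z : ↥(Metric.closedBall (0 : ℂ) t ∩ g ⁻¹' {0}), (zeroOrder g (z : ℂ) : ℝ)

lemma hasZeroOrder_unique {g : ℂ → ℂ} {z : ℂ} {m n : ℕ}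
    (hm : hasZeroOrder g z m) (hn : hasZeroOrder g z n) : m = n := by
  apply AnalyticAt.unique_eventuallyEq_pow_smul_nonzero (f := g) (z₀ := z)
  · obtain ⟨h, h1, h2, h3⟩ := hm
    exact ⟨h, h1, h2, by simpa [smul_eq_mul] using h3⟩
  · obtain ⟨h, h1, h2, h3⟩ := hn
    exact ⟨h, h1, h2, by simpa [smul_eq_mul] using h3⟩

/-- An entire function not vanishing at 0 is not eventually zero anywhere. -/
lemma not_eventually_zero {g : ℂ → ℂ} (hg : Differentiable ℂ g) (hg0 : g 0 ≠ 0) (z : ℂ) :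
    ¬ ∀ᶠ w in nhds z, g w = 0 := by
  intro h
  have han : AnalyticOnNhd ℂ g Set.univ := fun w _ => hg.analyticAt w
  have : Set.EqOn g 0 Set.univ := by
    apply han.eqOn_zero_of_preconnected_of_frequently_eq_zero isPreconnected_univ
      (Set.mem_univ z)
    exact (h.filter_mono nhdsWithin_le_nhds).frequently
  exact hg0 (this (Set.mem_univ 0))

lemma exists_hasZeroOrder {g : ℂ → ℂ} (hg : Differentiable ℂ g) (hg0 : g 0 ≠ 0) (z : ℂ) :
    ∃ m, hasZeroOrder g z m := by
  have := ((hg.analyticAt z).exists_eventuallyEq_pow_smul_nonzero_iff).mpr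
    (not_eventually_zero hg hg0 z)
  obtain ⟨n, h, h1, h2, h3⟩ := this
  exact ⟨n, h, h1, h2, by simpa [smul_eq_mul] using h3⟩

lemma zeroOrder_spec {g : ℂ → ℂ} (hg : Differentiable ℂ g) (hg0 : g 0 ≠ 0) (z : ℂ) :
    hasZeroOrder g z (zeroOrder g z) := by
  classical
  have h := exists_hasZeroOrder hg hg0 z
  rw [zeroOrder, dif_pos h]
  exact h.choose_spec

lemma zeroOrder_eq {g : ℂ → ℂ} (hg : Differentiable ℂ g) (hg0 : g 0 ≠ 0) {z : ℂ} {m : ℕ}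
    (hm : hasZeroOrder g z m) : zeroOrder g z = m :=
  hasZeroOrder_unique (zeroOrder_spec hg hg0 z) hm

lemma one_le_zeroOrder {g : ℂ → ℂ} (hg : Differentiable ℂ g) (hg0 : g 0 ≠ 0) {z : ℂ}
    (hz : g z = 0) : 1 ≤ zeroOrder g z := by
  by_contra h
  push_neg at h
  interval_cases h' : zeroOrder g z
  · obtain ⟨u, hu1, hu2, hu3⟩ := zeroOrder_spec hg hg0 z
    rw [h'] at hu3
    have := hu3.self_of_nhds
    simp only [pow_zero, one_mul] at this
    exact hu2 (this ▸ hz)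

/-- zero set in a closed ball is finite -/
lemma zeros_finite {g : ℂ → ℂ} (hg : Differentiable ℂ g) (hg0 : g 0 ≠ 0) (t : ℝ) :
    (Metric.closedBall (0 : ℂ) t ∩ g ⁻¹' {0}).Finite := by
  by_contra h
  
  have h2inf : (Metric.closedBall (0 : ℂ) t ∩ g ⁻¹' {0}).Infinite := h
  obtain ⟨z, _, hz⟩ := h2inf.exists_accPt_of_subset_isCompact
    (ProperSpace.isCompact_closedBall 0 t) Set.inter_subset_left
  have hfreq : ∃ᶠ w in nhdsWithin z {z}ᶜ, g w = 0 := by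
    have h2 := accPt_iff_frequently.mp hz
    rw [frequently_nhdsWithin_iff]
    exact h2.mono fun w hw => ⟨hw.2.2, hw.1⟩
  have := ((hg.analyticAt z).frequently_zero_iff_eventually_zero).mp hfreq
  exact not_eventually_zero hg hg0 z this


lemma peel {g : ℂ → ℂ} (hg : Differentiable ℂ g) (hg0 : g 0 ≠ 0) (z₀ : ℂ) :
    ∃ h : ℂ → ℂ, Differentiable ℂ h ∧ h 0 ≠ 0 ∧
      (∀ z, g z = (z - z₀) ^ (zeroOrder g z₀) * h z) ∧
      ∀ z, z ≠ z₀ → zeroOrder h z = zeroOrder g z := by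
  classical
  obtain ⟨v, hv, hv0, hveq⟩ := zeroOrder_spec hg hg0 z₀
  set m := zeroOrder g z₀ with hm
  set h : ℂ → ℂ := fun z => if z = z₀ then v z₀ else g z / (z - z₀) ^ m with hh
  have hfe : h =ᶠ[nhds z₀] v := by
    filter_upwards [hveq] with w hw
    by_cases hwz : w = z₀
    · simp [hh, hwz]
    · have : (w - z₀) ^ m ≠ 0 := pow_ne_zero _ (sub_ne_zero.mpr hwz)
      simp only [hh, if_neg hwz]
      rw [hw, mul_div_cancel_left₀ _ this]
  have hglob : ∀ z, g z = (z - z₀) ^ m * h z := by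
    intro z
    by_cases hz : z = z₀
    · subst hz
      have : h z = v z := hfe.self_of_nhds
      rw [this]
      exact hveq.self_of_nhds
    · have hne : (z - z₀) ^ m ≠ 0 := pow_ne_zero _ (sub_ne_zero.mpr hz)
      simp only [hh, if_neg hz]
      field_simp
  have hdiff : Differentiable ℂ h := by
    intro z
    by_cases hz : z = z₀
    · subst hz
      exact (Filter.EventuallyEq.differentiableAt_iff hfe).mpr (hv.differentiableAt)
    · have hfe2 : h =ᶠ[nhds z] fun w => g w / (w - z₀) ^ m := by
        filter_upwards [isOpen_compl_singleton.mem_nhds (by simpa using hz)] with w hw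
        simp only [hh, if_neg (by simpa using hw)]
      refine (Filter.EventuallyEq.differentiableAt_iff hfe2).mpr ?_
      exact ((hg z).div (((differentiable_id.sub (differentiable_const _)).pow m) z)
        (pow_ne_zero _ (sub_ne_zero.mpr hz)))
  have h00 : h 0 ≠ 0 := by
    have := hglob 0
    intro hcon
    rw [hcon, mul_zero] at this
    exact hg0 this
  refine ⟨h, hdiff, h00, hglob, fun z hz => ?_⟩
  obtain ⟨u, hu, hu0, hueq⟩ := zeroOrder_spec hdiff h00 z
  refine (zeroOrder_eq hg hg0 ⟨fun w => (w - z₀) ^ m * u w,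
    ((((analyticAt_id).sub analyticAt_const).pow m).mul hu), ?_, ?_⟩).symm
  · exact mul_ne_zero (pow_ne_zero _ (sub_ne_zero.mpr (by simpa using hz))) hu0
  · filter_upwards [hueq] with w hw
    rw [hglob w, hw]
    ring

lemma factor {g : ℂ → ℂ} (hg : Differentiable ℂ g) (hg0 : g 0 ≠ 0) (S : Finset ℂ)
    (hS : ∀ z ∈ S, g z = 0) :
    ∃ u : ℂ → ℂ, Differentiable ℂ u ∧
      ∀ w, g w = (∏ z ∈ S, (w - z) ^ (zeroOrder g z)) * u w := by
  classical
  induction S using Finset.induction_on generalizing g with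
  | empty => exact ⟨g, hg, fun w => by simp⟩
  | @insert z₀ S hz₀ ih =>
    obtain ⟨h, hdiff, h00, hglob, hord⟩ := peel hg hg0 z₀
    have hSh : ∀ z ∈ S, h z = 0 := by
      intro z hzS
      have hzz : z ≠ z₀ := fun e => hz₀ (e ▸ hzS)
      have := hglob z
      rw [hS z (Finset.mem_insert_of_mem hzS)] at this
      rcases mul_eq_zero.mp this.symm with h1 | h1
      · exact absurd h1 (pow_ne_zero _ (sub_ne_zero.mpr hzz))
      · exact h1
    obtain ⟨u, hu, hueq⟩ := ih hdiff h00 hSh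
    refine ⟨u, hu, fun w => ?_⟩
    rw [Finset.prod_insert hz₀, hglob w, hueq w, mul_assoc]
    congr 2
    exact Finset.prod_congr rfl fun z hzS => by
      rw [hord z (fun e => hz₀ (e ▸ hzS))]



lemma sphere_id {R : ℝ} (hR : 0 < R) (a z : ℂ) (hz : ‖z‖ = R) :
    ‖(R:ℂ)^2 - (starRingEnd ℂ a) * z‖ = R * ‖z - a‖ := by
  have h1 : ((R:ℂ))^2 = z * (starRingEnd ℂ z) := by
    rw [Complex.mul_conj, ← Complex.sq_norm, hz]
    push_cast
    ring
  calc ‖(R:ℂ)^2 - (starRingEnd ℂ a) * z‖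
      = ‖z * (starRingEnd ℂ (z - a))‖ := by
        congr 1
        rw [h1, map_sub]
        ring
    _ = ‖z‖ * ‖z - a‖ := by rw [norm_mul, Complex.norm_conj]
    _ = R * ‖z - a‖ := by rw [hz]

lemma maxmod {u : ℂ → ℂ} (hu : Differentiable ℂ u) {R M : ℝ} (hR : 0 < R)
    (hbd : ∀ z : ℂ, ‖z‖ = R → ‖u z‖ ≤ M) :
    ‖u 0‖ ≤ M := by
  refine Complex.norm_le_of_forall_mem_frontier_norm_le (U := Metric.ball (0:ℂ) R)
    Metric.isBounded_ball hu.diffContOnCl (fun z hz => ?_) ?_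
  · rw [frontier_ball (0:ℂ) hR.ne'] at hz
    have : ‖z‖ = R := by
      simpa [Complex.dist_eq] using hz
    exact hbd z this
  · exact subset_closure (Metric.mem_ball_self hR)

lemma key {R M : ℝ} (hR : 0 < R) (L : Multiset ℂ) :
    ∀ (u : ℂ → ℂ), Differentiable ℂ u →
    (∀ w ∈ L, w ≠ 0) →
    (∀ z : ℂ, ‖z‖ = R →
      ‖(L.map (fun w => z - w)).prod * u z‖ ≤ M) →
    ‖(L.map (fun w => (0:ℂ) - w)).prod * u 0‖ *
      (L.map (fun w => R / ‖w‖)).prod ≤ M := by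
  induction L using Multiset.induction_on with
  | empty =>
    intro u hu _ hbd
    simpa using maxmod hu hR (by simpa using hbd)
  | @cons a L ih =>
    intro u hu hne hbd
    have ha : a ≠ 0 := hne a (Multiset.mem_cons_self a L)
    have haa : ‖a‖ ≠ 0 := norm_ne_zero_iff.mpr ha
    set u' : ℂ → ℂ := fun z => u z * ((R:ℂ)^2 - (starRingEnd ℂ a) * z) / (R:ℂ) with hu'def
    have hu' : Differentiable ℂ u' := by
      apply Differentiable.div_const
      exact hu.mul ((differentiable_const _).sub ((differentiable_const _).mul differentiable_id))
    have habs : ∀ z, ‖u' z‖ =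
        ‖u z‖ * ‖(R:ℂ)^2 - (starRingEnd ℂ a) * z‖ / R := by
      intro z
      rw [hu'def]
      simp [norm_div, norm_mul, Complex.norm_real, Real.norm_eq_abs, abs_of_pos hR]
    have hbd' : ∀ z : ℂ, ‖z‖ = R →
        ‖(L.map (fun w => z - w)).prod * u' z‖ ≤ M := by
      intro z hz
      have := hbd z hz
      rw [Multiset.map_cons, Multiset.prod_cons] at this
      rw [norm_mul, habs z, sphere_id hR a z hz]
      rw [norm_mul, norm_mul] at this
      calc ‖(Multiset.map (fun w => z - w) L).prod‖ *
            (‖u z‖ * (R * ‖z - a‖) / R)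
          = ‖z - a‖ * ‖(Multiset.map (fun w => z - w) L).prod‖ *
            ‖u z‖ := by field_simp
        _ ≤ M := this
    have hIH := ih u' hu' (fun w hw => hne w (Multiset.mem_cons_of_mem hw)) hbd'
    have hu'0 : ‖u' 0‖ = ‖u 0‖ * R := by
      rw [habs 0]
      simp [norm_pow, Complex.norm_real, Real.norm_eq_abs, abs_of_pos hR]
      field_simp
    rw [Multiset.map_cons, Multiset.prod_cons, Multiset.map_cons, Multiset.prod_cons]
    rw [norm_mul, hu'0] at hIH
    rw [norm_mul, norm_mul]
    have hcancel : ‖(0:ℂ) - a‖ * (R / ‖a‖) = R := by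
      rw [zero_sub, norm_neg]
      field_simp
    calc ‖(0:ℂ) - a‖ * ‖(Multiset.map (fun w => (0:ℂ) - w) L).prod‖ *
          ‖u 0‖ * ((R / ‖a‖) * (Multiset.map (fun w => R / ‖w‖) L).prod)
        = (‖(0:ℂ) - a‖ * (R / ‖a‖)) *
          (‖(Multiset.map (fun w => (0:ℂ) - w) L).prod‖ * ‖u 0‖ *
           (Multiset.map (fun w => R / ‖w‖) L).prod) := by ring
      _ = ‖(Multiset.map (fun w => (0:ℂ) - w) L).prod‖ * (‖u 0‖ * R) *
          (Multiset.map (fun w => R / ‖w‖) L).prod := by rw [hcancel]; ring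
      _ ≤ M := hIH


lemma phi_intable {r c R : ℝ} (hr : 0 < r) (hR : r ≤ R) :
    IntervalIntegrable (fun t => if r < t then c / t else 0) volume 0 r ∧
    IntervalIntegrable (fun t => if r < t then c / t else 0) volume r R := by
  constructor
  · rw [intervalIntegrable_iff]
    apply (integrableOn_zero (s := Set.uIoc (0:ℝ) r)).congr_fun ?_ measurableSet_uIoc
    intro t ht
    rw [Set.uIoc_of_le hr.le] at ht
    simp [not_lt.mpr ht.2]
  · rw [intervalIntegrable_iff]
    have hcont : IntegrableOn (fun t : ℝ => c / t) (Set.uIoc r R) volume := by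
      apply (ContinuousOn.integrableOn_uIcc ?_).mono_set Set.uIoc_subset_uIcc
      apply continuousOn_const.div continuousOn_id
      intro t ht
      rw [Set.uIcc_of_le hR] at ht
      exact ne_of_gt (lt_of_lt_of_le hr ht.1)
    apply hcont.congr_fun ?_ measurableSet_uIoc
    intro t ht
    rw [Set.uIoc_of_le hR] at ht
    simp [ht.1]

lemma phi_integral {r c R : ℝ} (hr : 0 < r) (hR : r ≤ R) :
    ∫ t in (0:ℝ)..R, (if r < t then c / t else 0) = c * Real.log (R / r) := by
  obtain ⟨h1, h2⟩ := phi_intable (c := c) hr hR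
  rw [← intervalIntegral.integral_add_adjacent_intervals h1 h2]
  have e1 : ∫ t in (0:ℝ)..r, (if r < t then c / t else 0) = 0 := by
    rw [intervalIntegral.integral_congr (g := fun _ => (0:ℝ))]
    · simp
    · intro t ht
      rw [Set.uIcc_of_le hr.le] at ht
      simp [not_lt.mpr ht.2]
  have e2 : ∫ t in r..R, (if r < t then c / t else 0) = c * Real.log (R / r) := by
    rw [intervalIntegral.integral_congr_ae (g := fun t => c * (1 / t))]
    · rw [intervalIntegral.integral_const_mul, integral_one_div]
      intro h0
      rw [Set.uIcc_of_le hR] at h0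
      exact absurd h0.1 (not_le.mpr hr)
    · apply Filter.Eventually.of_forall
      intro t ht
      rw [Set.uIoc_of_le hR] at ht
      simp [ht.1]
      ring
  rw [e1, e2, zero_add]


lemma zc_eq {g : ℂ → ℂ} (hg : Differentiable ℂ g) (hg0 : g 0 ≠ 0) {R t : ℝ}
    (ht0 : 0 ≤ t) (htR : t ≤ R) :
    zeroCounting g t = ∑ z ∈ (zeros_finite hg hg0 R).toFinset,
      (if ‖z‖ ≤ t then (zeroOrder g z : ℝ) else 0) := by
  classical
  rw [zeroCounting, tsum_subtype (Metric.closedBall (0 : ℂ) t ∩ g ⁻¹' {0}) (fun z => (zeroOrder g z : ℝ))]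
  rw [tsum_eq_sum (s := (zeros_finite hg hg0 R).toFinset)
    (fun b hb => ?_)]
  · apply Finset.sum_congr rfl
    intro z hz
    rw [Set.Finite.mem_toFinset] at hz
    rw [Set.indicator_apply]
    apply if_congr _ rfl rfl
    constructor
    · intro h
      simpa [Complex.dist_eq] using h.1
    · intro h
      exact ⟨by simpa [Complex.dist_eq] using h, hz.2⟩
  · rw [Set.indicator_apply, if_neg]
    intro hb2
    rw [Set.Finite.mem_toFinset] at hb
    exact hb ⟨Metric.closedBall_subset_closedBall htR hb2.1, hb2.2⟩

lemma integral_eq {g : ℂ → ℂ} (hg : Differentiable ℂ g) (hg0 : g 0 ≠ 0) {R : ℝ}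
    (hR : 0 < R) :
    ∫ t in (0:ℝ)..R, zeroCounting g t / t = ∑ z ∈ (zeros_finite hg hg0 R).toFinset,
      (zeroOrder g z : ℝ) * Real.log (R / ‖z‖) := by
  classical
  set F := (zeros_finite hg hg0 R).toFinset with hF
  have hzF : ∀ z ∈ F, 0 < ‖z‖ ∧ ‖z‖ ≤ R := by
    intro z hz
    rw [hF, Set.Finite.mem_toFinset] at hz
    refine ⟨?_, by simpa [Complex.dist_eq] using hz.1⟩
    rw [norm_pos_iff]
    intro h0
    rw [h0] at hz
    exact hg0 hz.2
  have step1 : ∫ t in (0:ℝ)..R, zeroCounting g t / t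
      = ∫ t in (0:ℝ)..R, ∑ z ∈ F, (if ‖z‖ < t then (zeroOrder g z : ℝ) / t else 0) := by
    apply intervalIntegral.integral_congr_ae
    have hD : volume (↑(F.image (‖·‖)) : Set ℝ) = 0 :=
      Set.Finite.measure_zero (Finset.finite_toSet _) volume
    filter_upwards [measure_eq_zero_iff_ae_notMem.mp hD] with t htD htI
    rw [Set.uIoc_of_le hR.le] at htI
    rw [zc_eq hg hg0 htI.1.le htI.2, Finset.sum_div]
    apply Finset.sum_congr rfl
    intro z hz
    have hne : ‖z‖ ≠ t := by
      intro h
      apply htD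
      rw [← h]
      exact Finset.mem_coe.mpr (Finset.mem_image_of_mem (‖·‖) hz)
    have : (‖z‖ ≤ t) ↔ (‖z‖ < t) := by
      constructor
      · exact fun h => lt_of_le_of_ne h hne
      · exact le_of_lt
    by_cases h1 : ‖z‖ ≤ t
    · rw [if_pos h1, if_pos (this.mp h1)]
    · rw [if_neg h1, if_neg (fun h => h1 (le_of_lt h)), zero_div]
  rw [step1, intervalIntegral.integral_finset_sum (fun z hz => ?_)]
  · apply Finset.sum_congr rfl
    intro z hz
    exact phi_integral (hzF z hz).1 (hzF z hz).2
  · obtain ⟨h1, h2⟩ := phi_intable (c := (zeroOrder g z : ℝ)) (hzF z hz).1 (hzF z hz).2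
    exact h1.trans h2


lemma main_ineq {α : ℝ} (hα : 0 < α) {g : ℂ → ℂ} (hg : Differentiable ℂ g) (hg0 : g 0 ≠ 0)
    (hbd : ∀ z : ℂ, ‖g z‖ ≤ Real.exp (α * z.re ^ 2)) {R : ℝ} (hR : 0 < R) :
    ∫ t in (0:ℝ)..R, zeroCounting g t / t ≤ α * R ^ 2 / 2 - Real.log (‖g 0‖) := by
  classical
  set F := (zeros_finite hg hg0 R).toFinset with hF
  have hFz : ∀ z ∈ F, g z = 0 := by
    intro z hz
    rw [hF, Set.Finite.mem_toFinset] at hz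
    exact hz.2
  have hFne : ∀ z ∈ F, z ≠ 0 := by
    intro z hz h0
    exact hg0 (h0 ▸ hFz z hz)
  have hFle : ∀ z ∈ F, ‖z‖ ≤ R := by
    intro z hz
    rw [hF, Set.Finite.mem_toFinset] at hz
    simpa [Complex.dist_eq] using hz.1
  obtain ⟨u, hu, hueq⟩ := factor hg hg0 F hFz
  -- the multiset of rotated zeros
  set L : Multiset ℂ := F.val.bind (fun z =>
    Multiset.replicate (zeroOrder g z) z + Multiset.replicate (zeroOrder g z) (-Complex.I * z)
      + Multiset.replicate (zeroOrder g z) (-z) + Multiset.replicate (zeroOrder g z) (Complex.I * z)) with hL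
  set U : ℂ → ℂ := fun w => (∏ z ∈ F, (-1:ℂ) ^ (zeroOrder g z)) *
    (u w * u (Complex.I * w) * u (-w) * u (-Complex.I * w)) with hU
  have hprodL : ∀ x : ℂ, (L.map (fun w => x - w)).prod =
      ∏ z ∈ F, ((x - z) ^ (zeroOrder g z) * (x - (-Complex.I * z)) ^ (zeroOrder g z)
        * (x - (-z)) ^ (zeroOrder g z) * (x - (Complex.I * z)) ^ (zeroOrder g z)) := by
    intro x
    rw [hL, Multiset.map_bind, Multiset.prod_bind]
    rw [Finset.prod]
    apply congrArg
    apply Multiset.map_congr rfl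
    intro z _
    simp only [Multiset.map_add, Multiset.prod_add,
      Multiset.map_replicate, Multiset.prod_replicate]
  have hkey4 : ∀ x z : ℂ, (x - z) * ((Complex.I * x) - z) * ((-x) - z) * ((-Complex.I * x) - z)
      = (-1) * ((x - z) * (x - (-Complex.I * z)) * (x - (-z)) * (x - (Complex.I * z))) := by
    intro x z
    linear_combination (z^2 - x^2)^2 * Complex.I_sq
  have hP : ∀ x : ℂ, (∏ z ∈ F, (x - z) ^ zeroOrder g z)
      * (∏ z ∈ F, ((Complex.I * x) - z) ^ zeroOrder g z)
      * (∏ z ∈ F, ((-x) - z) ^ zeroOrder g z)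
      * (∏ z ∈ F, ((-Complex.I * x) - z) ^ zeroOrder g z)
      = (∏ z ∈ F, (-1:ℂ) ^ (zeroOrder g z)) * (L.map (fun w => x - w)).prod := by
    intro x
    rw [hprodL x, ← Finset.prod_mul_distrib, ← Finset.prod_mul_distrib,
      ← Finset.prod_mul_distrib, ← Finset.prod_mul_distrib]
    apply Finset.prod_congr rfl
    intro z _
    calc (x - z) ^ zeroOrder g z * ((Complex.I * x) - z) ^ zeroOrder g z
          * ((-x) - z) ^ zeroOrder g z * ((-Complex.I * x) - z) ^ zeroOrder g z
        = ((x - z) * ((Complex.I * x) - z) * ((-x) - z) * ((-Complex.I * x) - z)) ^ zeroOrder g z := by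
          rw [mul_pow, mul_pow, mul_pow]
      _ = ((-1) * ((x - z) * (x - (-Complex.I * z)) * (x - (-z)) * (x - (Complex.I * z)))) ^ zeroOrder g z := by
          rw [hkey4 x z]
      _ = (-1:ℂ) ^ (zeroOrder g z) * ((x - z) ^ zeroOrder g z * (x - (-Complex.I * z)) ^ zeroOrder g z
          * (x - (-z)) ^ zeroOrder g z * (x - (Complex.I * z)) ^ zeroOrder g z) := by
          rw [mul_pow, mul_pow, mul_pow, mul_pow]
  have hGfact : ∀ x : ℂ, g x * g (Complex.I * x) * g (-x) * g (-Complex.I * x)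
      = (L.map (fun w => x - w)).prod * U x := by
    intro x
    rw [hueq x, hueq (Complex.I * x), hueq (-x), hueq (-Complex.I * x), hU]
    have h2 := hP x
    calc (∏ z ∈ F, (x - z) ^ zeroOrder g z) * u x
          * ((∏ z ∈ F, ((Complex.I * x) - z) ^ zeroOrder g z) * u (Complex.I * x))
          * ((∏ z ∈ F, ((-x) - z) ^ zeroOrder g z) * u (-x))
          * ((∏ z ∈ F, ((-Complex.I * x) - z) ^ zeroOrder g z) * u (-Complex.I * x))
        = ((∏ z ∈ F, (x - z) ^ zeroOrder g z)
          * (∏ z ∈ F, ((Complex.I * x) - z) ^ zeroOrder g z)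
          * (∏ z ∈ F, ((-x) - z) ^ zeroOrder g z)
          * (∏ z ∈ F, ((-Complex.I * x) - z) ^ zeroOrder g z))
          * (u x * u (Complex.I * x) * u (-x) * u (-Complex.I * x)) := by ring
      _ = ((∏ z ∈ F, (-1:ℂ) ^ (zeroOrder g z)) * (L.map (fun w => x - w)).prod)
          * (u x * u (Complex.I * x) * u (-x) * u (-Complex.I * x)) := by rw [h2]
      _ = (L.map (fun w => x - w)).prod * ((∏ z ∈ F, (-1:ℂ) ^ (zeroOrder g z))
          * (u x * u (Complex.I * x) * u (-x) * u (-Complex.I * x))) := by ring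
  have hUdiff : Differentiable ℂ U := by
    apply Differentiable.const_mul
    apply Differentiable.mul
    apply Differentiable.mul
    apply Differentiable.mul hu
    · exact hu.comp ((differentiable_const _).mul differentiable_id)
    · exact hu.comp differentiable_id.neg
    · exact hu.comp ((differentiable_const _).mul differentiable_id)
  have hL0 : ∀ w ∈ L, w ≠ 0 := by
    intro w hw
    rw [hL, Multiset.mem_bind] at hw
    obtain ⟨z, hzF, hwz⟩ := hw
    have hzne : z ≠ 0 := hFne z hzF
    simp only [Multiset.mem_add, Multiset.eq_of_mem_replicate] at hwz
    rcases hwz with ((h | h) | h) | h <;>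
      rw [Multiset.eq_of_mem_replicate h] <;>
      simp [hzne, Complex.I_ne_zero]
  have hM : ∀ x : ℂ, ‖x‖ = R →
      ‖(L.map (fun w => x - w)).prod * U x‖ ≤ Real.exp (2 * α * R ^ 2) := by
    intro x hx
    rw [← hGfact x]
    have e1 := hbd x
    have e2 := hbd (Complex.I * x)
    have e3 := hbd (-x)
    have e4 := hbd (-Complex.I * x)
    have hre1 : (Complex.I * x).re = -x.im := by simp
    have hre2 : (-x).re = -x.re := by simp
    have hre3 : (-Complex.I * x).re = x.im := by simp
    rw [hre1] at e2; rw [hre2] at e3; rw [hre3] at e4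
    have hsq : x.re ^ 2 + x.im ^ 2 = R ^ 2 := by
      rw [← hx, Complex.sq_norm, Complex.normSq_apply]
      ring
    have hprodbd : ‖g x‖ * ‖g (Complex.I * x)‖ * ‖g (-x)‖
        * ‖g (-Complex.I * x)‖
        ≤ Real.exp (α * x.re ^ 2) * Real.exp (α * (-x.im) ^ 2) * Real.exp (α * (-x.re) ^ 2)
          * Real.exp (α * x.im ^ 2) := by
      gcongr <;> positivity
    rw [norm_mul, norm_mul, norm_mul]
    refine le_trans hprodbd ?_
    rw [← Real.exp_add, ← Real.exp_add, ← Real.exp_add]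
    apply Real.exp_le_exp.mpr
    nlinarith [hsq]
  have hkeyineq := key hR L U hUdiff hL0 hM
  -- identify the two factors
  have hfac1 : ‖(L.map (fun w => (0:ℂ) - w)).prod * U 0‖
      = ‖g 0‖ ^ 4 := by
    have h0 := hGfact 0
    simp only [mul_zero, neg_zero] at h0
    rw [← h0]
    simp only [norm_mul]
    ring
  have hfac2 : (L.map (fun w => R / ‖w‖)).prod
      = ∏ z ∈ F, ((R / ‖z‖) ^ (zeroOrder g z)) ^ 4 := by
    rw [hL, Multiset.map_bind, Multiset.prod_bind, Finset.prod]
    apply congrArg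
    apply Multiset.map_congr rfl
    intro z _
    simp only [Multiset.map_add, Multiset.prod_add,
      Multiset.map_replicate, Multiset.prod_replicate, norm_mul, norm_neg,
      Complex.norm_I, one_mul]
    ring
  rw [hfac1, hfac2] at hkeyineq
  -- take logs
  have hg0abs : 0 < ‖g 0‖ := norm_pos_iff.mpr hg0
  have hfin : ∀ z ∈ F, (0:ℝ) < ((R / ‖z‖) ^ (zeroOrder g z)) ^ 4 := by
    intro z hz
    have : 0 < ‖z‖ := norm_pos_iff.mpr (hFne z hz)
    positivity
  have hBpos : 0 < ∏ z ∈ F, ((R / ‖z‖) ^ (zeroOrder g z)) ^ 4 := Finset.prod_pos hfin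
  have hlog : Real.log (‖g 0‖ ^ 4 * ∏ z ∈ F, ((R / ‖z‖) ^ (zeroOrder g z)) ^ 4)
      ≤ 2 * α * R ^ 2 := by
    rw [← Real.log_exp (2 * α * R ^ 2)]
    apply Real.log_le_log (by positivity) hkeyineq
  rw [Real.log_mul (by positivity) (ne_of_gt hBpos), Real.log_pow,
    Real.log_prod (fun z hz => ne_of_gt (hfin z hz))] at hlog
  have hlogsum : ∀ z ∈ F, Real.log (((R / ‖z‖) ^ (zeroOrder g z)) ^ 4)
      = 4 * ((zeroOrder g z : ℝ) * Real.log (R / ‖z‖)) := by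
    intro z hz
    rw [Real.log_pow, Real.log_pow]
    push_cast
    ring
  rw [Finset.sum_congr rfl hlogsum, ← Finset.mul_sum] at hlog
  rw [integral_eq hg hg0 hR]
  push_cast at hlog ⊢
  nlinarith [hlog]


theorem stmt6 (α : ℝ) (hα : 0 < α) (g : ℂ → ℂ)
    (hg : Differentiable ℂ g) (hg0 : g 0 ≠ 0)
    (hbd : ∀ z : ℂ, ‖g z‖ ≤ Real.exp (α * z.re ^ 2)) :
    Filter.limsup (fun R : ℝ => (1 / R ^ 2) * ∫ t in (0 : ℝ)..R, zeroCounting g t / t)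
      Filter.atTop ≤ α / 2 := by
  set c := Real.log (‖g 0‖) with hc
  set u : ℝ → ℝ := fun R => (1 / R ^ 2) * ∫ t in (0 : ℝ)..R, zeroCounting g t / t with hu
  set v : ℝ → ℝ := fun R => α / 2 - c / R ^ 2 with hv
  have hub : ∀ᶠ R in atTop, u R ≤ v R := by
    filter_upwards [eventually_gt_atTop 0] with R hR
    have h := main_ineq hα hg hg0 hbd hR
    have hR2 : (0:ℝ) < R ^ 2 := by positivity
    calc u R ≤ (1 / R ^ 2) * (α * R ^ 2 / 2 - c) := by
          apply mul_le_mul_of_nonneg_left h (by positivity)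
      _ = v R := by
          rw [hv]
          field_simp
          try ring
          try exact Or.inl trivial
  have htend : Tendsto v atTop (nhds (α / 2)) := by
    have h0 : Tendsto (fun R : ℝ => c / R ^ 2) atTop (nhds 0) := by
      apply Tendsto.div_atTop tendsto_const_nhds
      exact tendsto_pow_atTop two_ne_zero |>.comp tendsto_id |>.congr (fun x => rfl)
    have := tendsto_const_nhds.sub h0 (f := fun _ : ℝ => α / 2)
    simpa using this
  have hlb : ∀ᶠ R in atTop, (0:ℝ) ≤ u R := by
    filter_upwards [eventually_gt_atTop 0] with R hR
    apply mul_nonneg (by positivity)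
    apply intervalIntegral.integral_nonneg hR.le
    intro t ht
    exact div_nonneg (tsum_nonneg (fun z => Nat.cast_nonneg _)) ht.1
  have hbdd : IsBoundedUnder (· ≥ ·) atTop u := ⟨0, by simpa [eventually_map] using hlb⟩
  have hcb : IsCoboundedUnder (· ≤ ·) atTop u := hbdd.isCoboundedUnder_le
  calc Filter.limsup u atTop ≤ Filter.limsup v atTop :=
        Filter.limsup_le_limsup hub hcb htend.isBoundedUnder_le
    _ = α / 2 := htend.limsup_eq
end

section
/- Evaluation bound: for 0 < p < ∞ and α > 0, there is a constant C such that for every w ∈ ℂ\{0} and every f ∈ F^p_α, |f(w)| ≤ C · e^{α(log|w|)²} |w|^{-2/p} ‖f‖_{F^p_α}. -/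
open Complex MeasureTheory Set Real


lemma lintegral_comp_polarCoord_symm_aux (f : ℝ × ℝ → ENNReal) :
    ∫⁻ p in polarCoord.target, ENNReal.ofReal p.1 * f (polarCoord.symm p) = ∫⁻ p, f p := by
  set B : ℝ × ℝ → ℝ × ℝ →L[ℝ] ℝ × ℝ := fun p =>
    LinearMap.toContinuousLinearMap (Matrix.toLin (Module.Basis.finTwoProd ℝ) (Module.Basis.finTwoProd ℝ)
      !![Real.cos p.2, -p.1 * Real.sin p.2; Real.sin p.2, p.1 * Real.cos p.2])
  have A : ∀ p ∈ polarCoord.target, HasFDerivWithinAt polarCoord.symm (B p) polarCoord.target p :=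
    fun p _ => (hasFDerivAt_polarCoord_symm p).hasFDerivWithinAt
  have B_det : ∀ p, (B p).det = p.1 := by
    intro p
    conv_rhs => rw [← one_mul p.1, ← Real.cos_sq_add_sin_sq p.2]
    simp only [B, neg_mul, LinearMap.det_toContinuousLinearMap, LinearMap.det_toLin,
      Matrix.det_fin_two_of, sub_neg_eq_add]
    ring
  have hinj : Set.InjOn polarCoord.symm polarCoord.target := polarCoord.symm.injOn
  have himg : polarCoord.symm '' polarCoord.target = polarCoord.source :=
    polarCoord.symm_image_target_eq_source
  calc
    ∫⁻ p in polarCoord.target, ENNReal.ofReal p.1 * f (polarCoord.symm p)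
        = ∫⁻ p in polarCoord.target, ENNReal.ofReal |(B p).det| * f (polarCoord.symm p) := by
      apply setLIntegral_congr_fun polarCoord.open_target.measurableSet
      intro p hp
      beta_reduce
      rw [B_det, abs_of_pos hp.1]
    _ = ∫⁻ p in polarCoord.symm '' polarCoord.target, f p :=
      (lintegral_image_eq_lintegral_abs_det_fderiv_mul volume
        polarCoord.open_target.measurableSet A hinj f).symm
    _ = ∫⁻ p in polarCoord.source, f p := by rw [himg]
    _ = ∫⁻ p, f p := by
      rw [setLIntegral_congr polarCoord_source_ae_eq_univ, setLIntegral_univ]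

lemma Complex.lintegral_comp_polarCoord_symm' (f : ℂ → ENNReal) :
    ∫⁻ p in polarCoord.target, ENNReal.ofReal p.1 * f (Complex.polarCoord.symm p) = ∫⁻ z, f z := by
  rw [← (Complex.volume_preserving_equiv_real_prod.symm).lintegral_comp_emb
    Complex.measurableEquivRealProd.symm.measurableEmbedding, ← lintegral_comp_polarCoord_symm_aux]
  rfl


lemma circle_mv {g : ℂ → ℂ} {c : ℂ} {r : ℝ} (hr : 0 < r)
    (hc : ContinuousOn g (Metric.closedBall c r))
    (hd : ∀ z ∈ Metric.ball c r, DifferentiableAt ℂ g z) :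
    2 * π * ‖g c‖ ≤ ∫ θ in (0)..(2 * π), ‖g (circleMap c r θ)‖ := by
  have key := circleIntegral_sub_center_inv_smul_of_differentiable_on_off_countable hr
    Set.countable_empty hc (fun z hz => hd z hz.1)
  have h2 : (∮ z in C(c, r), (z - c)⁻¹ • g z) = ∫ θ in (0)..(2 * π), I • g (circleMap c r θ) := by
    simp only [circleIntegral, deriv_circleMap, circleMap_sub_center, smul_smul]
    congr 1
    funext θ
    congr 1
    have h0 : circleMap 0 r θ ≠ 0 := circleMap_ne_center hr.ne'
    field_simp
  rw [h2] at key
  have h3 : ‖(2 * π * I : ℂ) • g c‖ = 2 * π * ‖g c‖ := by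
    simp [norm_smul, abs_of_pos Real.pi_pos, mul_assoc]
  calc 2 * π * ‖g c‖ = ‖∫ θ in (0)..(2 * π), I • g (circleMap c r θ)‖ := by rw [key, h3]
    _ ≤ ∫ θ in (0)..(2 * π), ‖I • g (circleMap c r θ)‖ := by
        apply intervalIntegral.norm_integral_le_integral_norm
        positivity
    _ = ∫ θ in (0)..(2 * π), ‖g (circleMap c r θ)‖ := by
        congr 1
        funext θ
        simp [norm_smul]

lemma area_mv {g : ℂ → ℂ} {c : ℂ} {s : ℝ} (hs : 0 < s)
    (hc : ContinuousOn g (Metric.closedBall c s))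
    (hd : ∀ z ∈ Metric.ball c s, DifferentiableAt ℂ g z) :
    ENNReal.ofReal (π * s ^ 2 * ‖g c‖) ≤ ∫⁻ z in Metric.ball c s, ENNReal.ofReal ‖g z‖ := by
  have hπ := Real.pi_pos
  set F : ℂ → ENNReal := (Metric.ball c s).indicator (fun z => ENNReal.ofReal ‖g z‖) with hF
  have hcirc : ∀ q : ℝ × ℝ, c + Complex.polarCoord.symm q = circleMap c q.1 q.2 := by
    intro q
    simp only [Complex.polarCoord_symm_apply, circleMap, Complex.exp_mul_I]
    push_cast
    ring
  -- step A : the set integral equals the polar integral over the restricted box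
  have e1 : ∫⁻ z in Metric.ball c s, ENNReal.ofReal ‖g z‖
      = ∫⁻ p in polarCoord.target, ENNReal.ofReal p.1 * F (c + Complex.polarCoord.symm p) := by
    rw [← lintegral_indicator measurableSet_ball, ← hF,
      ← lintegral_add_left_eq_self F c,
      ← Complex.lintegral_comp_polarCoord_symm' (fun z => F (c + z))]
  set S : Set (ℝ × ℝ) := Ioo (0:ℝ) s ×ˢ Ioo (-π) π with hS
  have hSmeas : MeasurableSet S := measurableSet_Ioo.prod measurableSet_Ioo
  have hmem : ∀ p ∈ S, c + Complex.polarCoord.symm p ∈ Metric.ball c s := by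
    intro p hp
    have : dist (c + Complex.polarCoord.symm p) c = |p.1| := by
      rw [dist_eq_norm, add_sub_cancel_left, Complex.norm_polarCoord_symm]
    rw [Metric.mem_ball, this, abs_of_pos hp.1.1]
    exact hp.1.2
  have e2 : ∫⁻ p in S, ENNReal.ofReal p.1 * ENNReal.ofReal ‖g (c + Complex.polarCoord.symm p)‖
      ≤ ∫⁻ p in polarCoord.target, ENNReal.ofReal p.1 * F (c + Complex.polarCoord.symm p) := by
    have hsub : S ⊆ polarCoord.target := by
      rintro ⟨a, b⟩ ⟨ha, hb⟩
      exact ⟨ha.1, hb⟩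
    refine le_trans (le_of_eq ?_) (lintegral_mono' (Measure.restrict_mono hsub le_rfl) le_rfl)
    apply setLIntegral_congr_fun hSmeas
    intro p hp
    beta_reduce
    rw [hF, Set.indicator_of_mem (hmem p hp)]
  -- step B : Fubini
  have hprodmeas : (volume.restrict (Ioo (0:ℝ) s)).prod (volume.restrict (Ioo (-π) π))
      = (volume : Measure (ℝ × ℝ)).restrict S := by
    rw [Measure.prod_restrict, ← Measure.volume_eq_prod]
  have haemeas : AEMeasurable
      (fun p : ℝ × ℝ => ENNReal.ofReal p.1 * ENNReal.ofReal ‖g (c + Complex.polarCoord.symm p)‖)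
      ((volume.restrict (Ioo (0:ℝ) s)).prod (volume.restrict (Ioo (-π) π))) := by
    rw [hprodmeas]
    have hT : Continuous (fun p : ℝ × ℝ => c + Complex.polarCoord.symm p) := by
      simp only [Complex.polarCoord_symm_apply]
      fun_prop
    have hcont : ContinuousOn
        (fun p : ℝ × ℝ => ‖g (c + Complex.polarCoord.symm p)‖) S := by
      apply ContinuousOn.norm
      exact (hc.mono Metric.ball_subset_closedBall).comp hT.continuousOn hmem
    exact (measurable_fst.ennreal_ofReal.aemeasurable).mul
      ((hcont.aemeasurable hSmeas).ennreal_ofReal)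
  have e3 : ∫⁻ p in S, ENNReal.ofReal p.1 * ENNReal.ofReal ‖g (c + Complex.polarCoord.symm p)‖
      = ∫⁻ r in Ioo (0:ℝ) s, ∫⁻ θ in Ioo (-π) π,
          ENNReal.ofReal r * ENNReal.ofReal ‖g (c + Complex.polarCoord.symm (r, θ))‖ := by
    rw [← hprodmeas, lintegral_prod _ haemeas]
  -- step C : inner circle bound
  have inner_bd : ∀ r ∈ Ioo (0:ℝ) s,
      ENNReal.ofReal r * ENNReal.ofReal (2 * π * ‖g c‖)
      ≤ ∫⁻ θ in Ioo (-π) π,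
          ENNReal.ofReal r * ENNReal.ofReal ‖g (c + Complex.polarCoord.symm (r, θ))‖ := by
    intro r hr
    rw [lintegral_const_mul' _ _ ENNReal.ofReal_ne_top]
    apply mul_le_mul_right ?_
    have hgc : Continuous fun θ => ‖g (circleMap c r θ)‖ := by
      apply Continuous.norm
      apply (hc.comp_continuous (continuous_circleMap c r)) fun θ => ?_
      exact Metric.closedBall_subset_closedBall hr.2.le (circleMap_mem_closedBall c hr.1.le θ)
    have hint : IntegrableOn (fun θ => ‖g (circleMap c r θ)‖) (Ioc (-π) π) := by
      exact hgc.integrableOn_Ioc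
    calc ENNReal.ofReal (2 * π * ‖g c‖)
        ≤ ENNReal.ofReal (∫ θ in (0)..(2 * π), ‖g (circleMap c r θ)‖) := by
          apply ENNReal.ofReal_le_ofReal
          exact circle_mv hr.1 (hc.mono (Metric.closedBall_subset_closedBall hr.2.le))
            (fun z hz => hd z (Metric.ball_subset_ball hr.2.le hz))
      _ = ENNReal.ofReal (∫ θ in (-π)..π, ‖g (circleMap c r θ)‖) := by
          have hper : Function.Periodic (fun θ => ‖g (circleMap c r θ)‖) (2 * π) := by
            intro θ; simp [periodic_circleMap c r θ]
          have h2 := hper.intervalIntegral_add_eq 0 (-π)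
          rw [zero_add, (by ring : -π + 2 * π = π)] at h2
          rw [h2]
      _ = ENNReal.ofReal (∫ θ in Ioc (-π) π, ‖g (circleMap c r θ)‖) := by
          rw [intervalIntegral.integral_of_le (by linarith)]
      _ = ∫⁻ θ in Ioc (-π) π, ENNReal.ofReal ‖g (circleMap c r θ)‖ := by
          apply ofReal_integral_eq_lintegral_ofReal hint
          filter_upwards with θ using norm_nonneg _
      _ = ∫⁻ θ in Ioo (-π) π, ENNReal.ofReal ‖g (circleMap c r θ)‖ := by
          rw [Measure.restrict_congr_set Ioo_ae_eq_Ioc]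
      _ = ∫⁻ θ in Ioo (-π) π, ENNReal.ofReal ‖g (c + Complex.polarCoord.symm (r, θ))‖ := by
          apply lintegral_congr fun θ => ?_
          rw [hcirc (r, θ)]
  -- step D : outer integral
  have e4 : ENNReal.ofReal (π * s ^ 2 * ‖g c‖)
      = ∫⁻ r in Ioo (0:ℝ) s, ENNReal.ofReal r * ENNReal.ofReal (2 * π * ‖g c‖) := by
    have hr2 : ∫⁻ r in Ioo (0:ℝ) s, ENNReal.ofReal r = ENNReal.ofReal (s ^ 2 / 2) := by
      rw [Measure.restrict_congr_set Ioo_ae_eq_Ioc,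
        ← ofReal_integral_eq_lintegral_ofReal]
      · congr 1
        rw [← intervalIntegral.integral_of_le hs.le]
        rw [integral_id]
        ring
      · exact continuous_id.integrableOn_Ioc
      · exact (ae_restrict_iff' measurableSet_Ioc).mpr
          (by filter_upwards with r hr using hr.1.le)
    rw [lintegral_mul_const' _ _ ENNReal.ofReal_ne_top, hr2,
      ← ENNReal.ofReal_mul (by positivity)]
    congr 1
    ring
  rw [e1, e4]
  refine le_trans ?_ e2
  rw [e3]
  apply lintegral_mono_ae
  rw [ae_restrict_iff' measurableSet_Ioo]
  filter_upwards with r hr using inner_bd r hr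

lemma submean {p : ℝ} (hp : 0 < p) {w : ℂ} {R : ℝ} (hR : 0 < R) {g : ℂ → ℂ}
    (hc : ContinuousOn g (Metric.closedBall w R))
    (hd : ∀ z ∈ Metric.ball w R, DifferentiableAt ℂ g z) :
    ENNReal.ofReal (π * R ^ 2 * ‖g w‖ ^ p) ≤
      ENNReal.ofReal ((2:ℝ) ^ p + (4:ℝ) ^ (1/p)) *
        ∫⁻ z in Metric.ball w R, ENNReal.ofReal (‖g z‖ ^ p) := by
  have hπ := Real.pi_pos
  have hCp : (0:ℝ) < (2:ℝ) ^ p + (4:ℝ) ^ (1/p) := by positivity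
  set J := ∫⁻ z in Metric.ball w R, ENNReal.ofReal (‖g z‖ ^ p) with hJdef
  by_cases hJtop : J = ⊤
  · rw [hJtop, ENNReal.mul_top ((ENNReal.ofReal_pos.2 hCp).ne')]
    exact le_top
  set Jr := J.toReal with hJrdef
  have hJr : J = ENNReal.ofReal Jr := (ENNReal.ofReal_toReal hJtop).symm
  have hJrnn : (0:ℝ) ≤ Jr := ENNReal.toReal_nonneg
  suffices hreal : π * R ^ 2 * ‖g w‖ ^ p ≤ ((2:ℝ) ^ p + (4:ℝ) ^ (1/p)) * Jr by
    calc ENNReal.ofReal (π * R ^ 2 * ‖g w‖ ^ p)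
        ≤ ENNReal.ofReal (((2:ℝ) ^ p + (4:ℝ) ^ (1/p)) * Jr) := ENNReal.ofReal_le_ofReal hreal
      _ = ENNReal.ofReal ((2:ℝ) ^ p + (4:ℝ) ^ (1/p)) * ENNReal.ofReal Jr :=
          ENNReal.ofReal_mul hCp.le
      _ = _ := by rw [← hJr]
  by_cases hg0 : ‖g w‖ = 0
  · rw [hg0, Real.zero_rpow hp.ne', mul_zero]
    positivity
  have hgw : 0 < ‖g w‖ := (norm_nonneg _).lt_of_ne' hg0
  set K := Jr / (π * R ^ 2) with hK
  have hKnn : 0 ≤ K := by positivity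
  have hJrK : Jr = K * (π * R ^ 2) := by rw [hK]; field_simp
  -- the key consequence of the area mean value inequality
  have key : ∀ (z : ℂ) (s : ℝ) (A : ℝ), 0 < s → 0 ≤ A →
      Metric.closedBall z s ⊆ Metric.closedBall w R →
      Metric.ball z s ⊆ Metric.ball w R →
      (∀ x ∈ Metric.ball z s, ‖g x‖ ≤ A * ‖g x‖ ^ p) →
      π * s ^ 2 * ‖g z‖ ≤ A * Jr := by
    intro z s A hs hA hsub1 hsub2 hbd
    have h1 := area_mv hs (hc.mono hsub1) (fun x hx => hd x (hsub2 hx))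
    have h2 : ∫⁻ x in Metric.ball z s, ENNReal.ofReal ‖g x‖ ≤ ENNReal.ofReal A * J := by
      calc ∫⁻ x in Metric.ball z s, ENNReal.ofReal ‖g x‖
          ≤ ∫⁻ x in Metric.ball z s, ENNReal.ofReal A * ENNReal.ofReal (‖g x‖ ^ p) := by
            apply setLIntegral_mono' measurableSet_ball
            intro x hx
            rw [← ENNReal.ofReal_mul hA]
            exact ENNReal.ofReal_le_ofReal (hbd x hx)
        _ = ENNReal.ofReal A * ∫⁻ x in Metric.ball z s, ENNReal.ofReal (‖g x‖ ^ p) :=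
            lintegral_const_mul' _ _ ENNReal.ofReal_ne_top
        _ ≤ ENNReal.ofReal A * J := by
            apply mul_le_mul_right
            exact lintegral_mono' (Measure.restrict_mono hsub2 le_rfl) le_rfl
    have h3 : ENNReal.ofReal (π * s ^ 2 * ‖g z‖) ≤ ENNReal.ofReal (A * Jr) := by
      refine (h1.trans h2).trans (le_of_eq ?_)
      rw [hJr, ← ENNReal.ofReal_mul hA]
    exact (ENNReal.ofReal_le_ofReal_iff (by positivity)).1 h3
  rcases le_or_gt p 1 with hp1 | hp1
  · -- CASE 0 < p ≤ 1 : iteration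
    set q := 1 - p with hq
    have hq0 : (0:ℝ) ≤ q := by simp [hq]; linarith
    have hq1 : q < 1 := by simp [hq]; linarith
    set M : ℝ → ℝ := fun t => sSup ((fun z => ‖g z‖) '' Metric.closedBall w (t * R)) with hM
    have hbdd : ∀ t : ℝ, t ≤ 1 → BddAbove ((fun z => ‖g z‖) '' Metric.closedBall w (t * R)) := by
      intro t ht
      apply (isCompact_closedBall _ _).bddAbove_image
      exact (hc.mono (Metric.closedBall_subset_closedBall (by nlinarith))).norm
    have hwmem : ∀ t : ℝ, 0 ≤ t → w ∈ Metric.closedBall w (t * R) := by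
      intro t ht
      simp only [Metric.mem_closedBall, dist_self]
      positivity
    have hMub : ∀ t, 0 ≤ t → t ≤ 1 → ∀ z ∈ Metric.closedBall w (t * R), ‖g z‖ ≤ M t :=
      fun t _ ht1 z hz => le_csSup (hbdd t ht1) (mem_image_of_mem _ hz)
    have hMw : ∀ t, 0 ≤ t → t ≤ 1 → ‖g w‖ ≤ M t := fun t h0 h1 => hMub t h0 h1 w (hwmem t h0)
    have hMnn : ∀ t, 0 ≤ t → t ≤ 1 → 0 ≤ M t := fun t h0 h1 => (norm_nonneg _).trans (hMw t h0 h1)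
    have hMle1 : ∀ t, 0 ≤ t → t ≤ 1 → M t ≤ M 1 := by
      intro t h0 h1
      apply csSup_le ⟨_, mem_image_of_mem _ (hwmem t h0)⟩
      rintro x ⟨z, hz, rfl⟩
      refine hMub 1 zero_le_one le_rfl z ?_
      exact Metric.closedBall_subset_closedBall (by nlinarith) hz
    have step : ∀ t t' : ℝ, 0 ≤ t → t < t' → t' ≤ 1 →
        M t ≤ M t' ^ q * (K / (t' - t) ^ 2) := by
      intro t t' ht htt' ht'
      have ht'0 : (0:ℝ) ≤ t' := le_trans ht htt'.le
      have hMt' := hMnn t' ht'0 ht'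
      apply csSup_le ⟨_, mem_image_of_mem _ (hwmem t ht)⟩
      rintro x ⟨z, hz, rfl⟩
      set s := (t' - t) * R with hs
      have hspos : 0 < s := mul_pos (by linarith) hR
      have hzd : dist z w ≤ t * R := Metric.mem_closedBall.1 hz
      have hsub1 : Metric.closedBall z s ⊆ Metric.closedBall w R := by
        intro x hx
        rw [Metric.mem_closedBall] at *
        calc dist x w ≤ dist x z + dist z w := dist_triangle _ _ _
          _ ≤ s + t * R := add_le_add hx hzd
          _ ≤ R := by rw [hs]; nlinarith
      have hsub2 : Metric.ball z s ⊆ Metric.ball w R := by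
        intro x hx
        rw [Metric.mem_ball] at *
        calc dist x w ≤ dist x z + dist z w := dist_triangle _ _ _
          _ < s + t * R := by linarith [hzd]
          _ ≤ R := by rw [hs]; nlinarith
      have hsub3 : Metric.ball z s ⊆ Metric.closedBall w (t' * R) := by
        intro x hx
        rw [Metric.mem_ball] at hx
        rw [Metric.mem_closedBall]
        calc dist x w ≤ dist x z + dist z w := dist_triangle _ _ _
          _ ≤ s + t * R := by linarith [hzd]
          _ = t' * R := by rw [hs]; ring
      have hbd : ∀ x ∈ Metric.ball z s, ‖g x‖ ≤ M t' ^ q * ‖g x‖ ^ p := by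
        intro x hx
        have hxM : ‖g x‖ ≤ M t' := hMub t' ht'0 ht' x (hsub3 hx)
        have hnn := norm_nonneg (g x)
        calc ‖g x‖ = ‖g x‖ ^ (q + p) := by
              rw [(by rw [hq]; ring : q + p = 1), Real.rpow_one]
          _ = ‖g x‖ ^ q * ‖g x‖ ^ p := Real.rpow_add_of_nonneg hnn hq0 hp.le
          _ ≤ M t' ^ q * ‖g x‖ ^ p :=
              mul_le_mul_of_nonneg_right (Real.rpow_le_rpow hnn hxM hq0)
                (Real.rpow_nonneg hnn p)
      have hkey := key z s (M t' ^ q) hspos (Real.rpow_nonneg hMt' q) hsub1 hsub2 hbd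
      have hs2 : (0:ℝ) < π * s ^ 2 := by positivity
      have httpos : (0:ℝ) < t' - t := by linarith
      have e2 : M t' ^ q * (K / (t' - t) ^ 2) = M t' ^ q * Jr / ((t' - t) ^ 2 * (π * R ^ 2)) := by
        rw [hK]
        field_simp
      rw [e2, le_div_iff₀ (mul_pos (pow_pos httpos 2) (by positivity))]
      calc ‖g z‖ * ((t' - t) ^ 2 * (π * R ^ 2)) = π * s ^ 2 * ‖g z‖ := by rw [hs]; ring
        _ ≤ _ := hkey
    rcases eq_or_lt_of_le hJrnn with hJr0 | hJrpos
    · exfalso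
      have h0 := step 0 1 le_rfl one_pos le_rfl
      rw [← hJr0] at hJrK
      have hK0 : K = 0 := by
        rcases mul_eq_zero.1 hJrK.symm with h | h
        · exact h
        · exact absurd h (by positivity)
      rw [hK0] at h0
      simp at h0
      linarith [hMw 0 le_rfl zero_le_one, hgw]
    have hKpos : 0 < K := by
      rw [hK]
      positivity
    have hM1pos : 0 < M 1 := lt_of_lt_of_le hgw (hMw 1 zero_le_one le_rfl)
    set t : ℕ → ℝ := fun k => 1 - (1/2:ℝ) ^ k with ht
    have ht0 : t 0 = 0 := by simp [ht]
    have htnn : ∀ k, 0 ≤ t k := by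
      intro k
      have h : (1/2:ℝ) ^ k ≤ 1 := pow_le_one₀ (by norm_num) (by norm_num)
      simp only [ht]
      linarith
    have htle : ∀ k, t k ≤ 1 := by
      intro k
      have h : (0:ℝ) < (1/2:ℝ) ^ k := by positivity
      simp only [ht]
      linarith
    have htgap : ∀ k : ℕ, t (k+1) - t k = (1/2:ℝ) ^ (k+1) := by
      intro k
      simp only [ht]
      rw [pow_succ]
      ring
    have htlt : ∀ k : ℕ, t k < t (k+1) := by
      intro k
      have h2 : 0 < t (k+1) - t k := by
        rw [htgap k]
        positivity
      linarith
    set c : ℕ → ℝ := fun n => Real.log K + ((n:ℝ) + 1) * Real.log 4 with hcdef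
    set S : ℕ → ℝ := fun n => ∑ j ∈ Finset.range n, c j * q ^ j with hSdef
    have hfact : ∀ n : ℕ, K / ((1/2:ℝ) ^ (n+1)) ^ 2 = Real.exp (c n) := by
      intro n
      have h4 : ((1/2:ℝ) ^ (n+1)) ^ 2 = ((1/4:ℝ) ^ (n+1)) := by
        rw [← pow_mul, mul_comm, pow_mul]
        norm_num
      rw [h4, hcdef, Real.exp_add, Real.exp_log hKpos]
      have : Real.exp (((n:ℝ) + 1) * Real.log 4) = (4:ℝ) ^ (n+1) := by
        have hcast : ((n:ℝ) + 1) = ((n + 1 : ℕ) : ℝ) := by push_cast; ring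
        rw [hcast, ← Real.log_pow, Real.exp_log (by positivity)]
      rw [this, div_eq_mul_inv]
      congr 1
      rw [one_div, inv_pow, inv_inv]
    have step' : ∀ n : ℕ, M (t n) ≤ M (t (n+1)) ^ q * Real.exp (c n) := by
      intro n
      have h := step (t n) (t (n+1)) (htnn n) (htlt n) (htle (n+1))
      rwa [htgap n, hfact n] at h
    have claim : ∀ n : ℕ, M (t 0) ≤ M (t n) ^ ((q:ℝ) ^ n) * Real.exp (S n) := by
      intro n
      induction n with
      | zero =>
        simp only [pow_zero, Real.rpow_one, hSdef, Finset.range_zero, Finset.sum_empty,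
          Real.exp_zero, mul_one]
        exact le_rfl
      | succ n ih =>
        have hMtn : 0 ≤ M (t n) := hMnn _ (htnn n) (htle n)
        have hMtn1 : 0 ≤ M (t (n+1)) := hMnn _ (htnn (n+1)) (htle (n+1))
        have hqn : (0:ℝ) ≤ q ^ n := pow_nonneg hq0 n
        calc M (t 0) ≤ M (t n) ^ ((q:ℝ)^n) * Real.exp (S n) := ih
          _ ≤ (M (t (n+1)) ^ q * Real.exp (c n)) ^ ((q:ℝ)^n) * Real.exp (S n) := by
              apply mul_le_mul_of_nonneg_right _ (Real.exp_nonneg _)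
              exact Real.rpow_le_rpow hMtn (step' n) hqn
          _ = M (t (n+1)) ^ ((q:ℝ)^(n+1)) * Real.exp (S (n+1)) := by
              have h1 : q * q ^ n = q ^ (n+1) := (pow_succ' q n).symm
              have h2 : c n * q ^ n + S n = S (n+1) := by
                simp only [hSdef, Finset.sum_range_succ]
                ring
              rw [Real.mul_rpow (Real.rpow_nonneg hMtn1 q) (Real.exp_nonneg _),
                ← Real.rpow_mul hMtn1, ← Real.exp_mul, h1, mul_assoc, ← Real.exp_add, h2]
    have hMle : ∀ n : ℕ, M (t 0) ≤ Real.exp (Real.log (M 1) * q ^ n + S n) := by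
      intro n
      have h2 : M (t n) ^ ((q:ℝ)^n) ≤ M 1 ^ ((q:ℝ)^n) :=
        Real.rpow_le_rpow (hMnn _ (htnn n) (htle n)) (hMle1 _ (htnn n) (htle n))
          (pow_nonneg hq0 n)
      calc M (t 0) ≤ M 1 ^ ((q:ℝ)^n) * Real.exp (S n) :=
            (claim n).trans (mul_le_mul_of_nonneg_right h2 (Real.exp_nonneg _))
        _ = Real.exp (Real.log (M 1) * q ^ n + S n) := by
            rw [Real.rpow_def_of_pos hM1pos, Real.exp_add]
    have hq' : ‖q‖ < 1 := by rw [_root_.Real.norm_eq_abs, _root_.abs_of_nonneg hq0]; exact hq1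
    have hgeo : HasSum (fun j : ℕ => Real.log K * q ^ j) (Real.log K * (1 - q)⁻¹) :=
      (hasSum_geometric_of_lt_one hq0 hq1).mul_left _
    have hjgeo : HasSum (fun j : ℕ => Real.log 4 * (((j:ℝ) + 1) * q ^ j))
        (Real.log 4 * (q / (1 - q)^2 + (1 - q)⁻¹)) := by
      have h1 := hasSum_coe_mul_geometric_of_norm_lt_one hq'
      have h3 := h1.add (hasSum_geometric_of_lt_one hq0 hq1)
      have he : (fun j : ℕ => ((j:ℝ) * q^j + q^j)) = fun j : ℕ => ((j:ℝ)+1) * q^j := by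
        funext j
        ring
      rw [he] at h3
      exact h3.mul_left _
    have hsum : HasSum (fun j : ℕ => c j * q ^ j)
        (Real.log K * (1-q)⁻¹ + Real.log 4 * (q / (1-q)^2 + (1-q)⁻¹)) := by
      have h := hgeo.add hjgeo
      have he : (fun j : ℕ => Real.log K * q^j + Real.log 4 * (((j:ℝ)+1) * q^j))
          = fun j => c j * q^j := by
        funext j
        rw [hcdef]
        ring
      rwa [he] at h
    have hStend : Filter.Tendsto S Filter.atTop
        (nhds (Real.log K * (1-q)⁻¹ + Real.log 4 * (q / (1-q)^2 + (1-q)⁻¹))) :=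
      hsum.tendsto_sum_nat
    have hqtend : Filter.Tendsto (fun n : ℕ => Real.log (M 1) * q ^ n) Filter.atTop
        (nhds 0) := by
      have h := tendsto_pow_atTop_nhds_zero_of_lt_one hq0 hq1
      simpa using h.const_mul (Real.log (M 1))
    have htotal := (Real.continuous_exp.tendsto _).comp (hqtend.add hStend)
    have hlim : M (t 0) ≤ Real.exp (0 + (Real.log K * (1-q)⁻¹ +
        Real.log 4 * (q / (1-q)^2 + (1-q)⁻¹))) := ge_of_tendsto' htotal hMle
    have h1q : 1 - q = p := by rw [hq]; ring
    rw [zero_add, Real.exp_add, ← Real.rpow_def_of_pos hKpos,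
      ← Real.rpow_def_of_pos (by norm_num : (0:ℝ) < 4), h1q] at hlim
    have hgw0 : ‖g w‖ ≤ K ^ (p⁻¹) * (4:ℝ) ^ (q/p^2 + p⁻¹) := by
      refine le_trans ?_ hlim
      rw [ht0]
      exact hMw 0 le_rfl zero_le_one
    have hrpow : ‖g w‖ ^ p ≤ K * (4:ℝ) ^ (1/p) := by
      have h := Real.rpow_le_rpow (norm_nonneg _) hgw0 hp.le
      have hKp : ((K : ℝ) ^ (p⁻¹:ℝ)) ^ p = K := by
        rw [← Real.rpow_mul hKnn, inv_mul_cancel₀ hp.ne', Real.rpow_one]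
      have h4p : (((4:ℝ) ^ (q/p^2 + p⁻¹)) ^ p) = (4:ℝ) ^ (1/p) := by
        rw [← Real.rpow_mul (by norm_num : (0:ℝ) ≤ 4)]
        congr 1
        rw [hq]
        field_simp
        ring
      calc ‖g w‖^p ≤ (K^(p⁻¹:ℝ) * (4:ℝ)^(q/p^2+p⁻¹))^p := h
        _ = (K^(p⁻¹:ℝ))^p * ((4:ℝ)^(q/p^2+p⁻¹))^p :=
            Real.mul_rpow (Real.rpow_nonneg hKnn _) (Real.rpow_nonneg (by norm_num) _)
        _ = K * (4:ℝ)^(1/p) := by rw [hKp, h4p]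
    calc π * R^2 * ‖g w‖^p ≤ π * R^2 * (K * (4:ℝ)^(1/p)) :=
          mul_le_mul_of_nonneg_left hrpow (by positivity)
      _ = (4:ℝ)^(1/p) * Jr := by rw [hJrK]; ring
      _ ≤ ((2:ℝ)^p + (4:ℝ)^(1/p)) * Jr := by
          have h2 : (0:ℝ) ≤ (2:ℝ)^p := by positivity
          nlinarith
  · -- CASE 1 < p
    have hvol : volume (Metric.ball w R) = ENNReal.ofReal (π * R ^ 2) := by
      rw [Complex.volume_ball, ← NNReal.coe_real_pi,
        ENNReal.ofReal_mul NNReal.pi.coe_nonneg, ENNReal.ofReal_coe_nnreal,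
        ENNReal.ofReal_pow hR.le]
      ring
    have lam_bd : ∀ lam : ℝ, 0 < lam →
        π * R ^ 2 * ‖g w‖ ≤ lam ^ (1 - p) * Jr + lam * (π * R ^ 2) := by
      intro lam hlam
      have h1 := area_mv hR hc hd
      have hpt : ∀ x : ℂ, ‖g x‖ ≤ lam ^ (1-p) * ‖g x‖ ^ p + lam := by
        intro x
        have hnn := norm_nonneg (g x)
        rcases le_or_gt ‖g x‖ lam with h | h
        · have h2 : 0 ≤ lam ^ (1-p) * ‖g x‖ ^ p := by positivity
          linarith
        · have hx0 : 0 < ‖g x‖ := hlam.trans h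
          have he : ‖g x‖ = ‖g x‖ ^ p * ‖g x‖ ^ (1-p) := by
            rw [← Real.rpow_add hx0]
            norm_num
          have h2 : ‖g x‖ ^ (1-p) ≤ lam ^ (1-p) :=
            Real.rpow_le_rpow_of_nonpos hlam h.le (by linarith)
          calc ‖g x‖ = ‖g x‖ ^ p * ‖g x‖ ^ (1-p) := he
            _ ≤ ‖g x‖ ^ p * lam ^ (1-p) :=
                mul_le_mul_of_nonneg_left h2 (Real.rpow_nonneg hnn p)
            _ = lam ^ (1-p) * ‖g x‖ ^ p := by ring
            _ ≤ _ := le_add_of_nonneg_right hlam.le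
      have h2 : ∫⁻ x in Metric.ball w R, ENNReal.ofReal ‖g x‖
          ≤ ENNReal.ofReal (lam ^ (1-p)) * J
            + ENNReal.ofReal lam * volume (Metric.ball w R) := by
        calc ∫⁻ x in Metric.ball w R, ENNReal.ofReal ‖g x‖
            ≤ ∫⁻ x in Metric.ball w R,
                (ENNReal.ofReal (lam ^ (1-p)) * ENNReal.ofReal (‖g x‖ ^ p)
                  + ENNReal.ofReal lam) := by
              apply setLIntegral_mono' measurableSet_ball
              intro x _
              rw [← ENNReal.ofReal_mul (Real.rpow_nonneg hlam.le _),
                ← ENNReal.ofReal_add (by positivity) hlam.le]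
              exact ENNReal.ofReal_le_ofReal (hpt x)
          _ = (∫⁻ x in Metric.ball w R,
                ENNReal.ofReal (lam ^ (1-p)) * ENNReal.ofReal (‖g x‖ ^ p))
              + ENNReal.ofReal lam * volume (Metric.ball w R) := by
              rw [lintegral_add_right' _ aemeasurable_const, setLIntegral_const]
          _ = _ := by
              rw [lintegral_const_mul' _ _ ENNReal.ofReal_ne_top]
      have h3 : ENNReal.ofReal (π * R^2 * ‖g w‖)
          ≤ ENNReal.ofReal (lam^(1-p) * Jr + lam * (π * R^2)) := by
        refine (h1.trans h2).trans (le_of_eq ?_)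
        rw [hvol, hJr, ← ENNReal.ofReal_mul (Real.rpow_nonneg hlam.le _),
          ← ENNReal.ofReal_mul hlam.le,
          ← ENNReal.ofReal_add (mul_nonneg (Real.rpow_nonneg hlam.le _) hJrnn) (by positivity)]
      exact (ENNReal.ofReal_le_ofReal_iff
        (add_nonneg (mul_nonneg (Real.rpow_nonneg hlam.le _) hJrnn) (by positivity))).1 h3
    rcases eq_or_lt_of_le hJrnn with hJr0 | hJrpos
    · exfalso
      have hsmall : ∀ lam : ℝ, 0 < lam → ‖g w‖ ≤ lam := by
        intro lam hlam
        have h := lam_bd lam hlam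
        rw [← hJr0, mul_zero, zero_add] at h
        have hpr : 0 < π * R^2 := by positivity
        nlinarith
      have := hsmall (‖g w‖ / 2) (by positivity)
      linarith
    · have hKpos : 0 < K := div_pos hJrpos (by positivity)
      set lam := K ^ (1/p) with hlamdef
      have hlampos : 0 < lam := Real.rpow_pos_of_pos hKpos _
      have hb := lam_bd lam hlampos
      have hcomp : lam ^ (1-p) * Jr = lam * (π * R ^ 2) := by
        have hexp : (1/p)*(1-p) + 1 = 1/p := by field_simp; ring
        rw [hlamdef, ← Real.rpow_mul hKnn, hJrK, ← mul_assoc,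
          ← Real.rpow_add_one hKpos.ne', hexp]
      rw [hcomp] at hb
      have hpr : 0 < π * R^2 := by positivity
      have hgw2 : ‖g w‖ ≤ 2 * lam := by
        have h2 : π * R ^ 2 * ‖g w‖ ≤ π * R ^ 2 * (2 * lam) := by linarith
        exact le_of_mul_le_mul_left h2 hpr
      have hfp : ‖g w‖ ^ p ≤ 2 ^ p * K := by
        have h := Real.rpow_le_rpow (norm_nonneg _) hgw2 hp.le
        rw [Real.mul_rpow (by norm_num) hlampos.le] at h
        have hlp : lam ^ p = K := by
          rw [hlamdef, ← Real.rpow_mul hKnn, one_div, inv_mul_cancel₀ hp.ne', Real.rpow_one]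
        rwa [hlp] at h
      calc π * R^2 * ‖g w‖^p ≤ π * R^2 * (2^p * K) :=
            mul_le_mul_of_nonneg_left hfp (by positivity)
        _ = 2^p * Jr := by rw [hJrK]; ring
        _ ≤ ((2:ℝ)^p + (4:ℝ)^(1/p)) * Jr := by
            have h4 : (0:ℝ) ≤ (4:ℝ) ^ (1/p) := Real.rpow_nonneg (by norm_num) _
            have h5 : (0:ℝ) ≤ (4:ℝ)^(1/p) * Jr := mul_nonneg h4 hJrnn
            rw [add_mul]
            linarith


theorem stmt12 (α p : ℝ) (hα : 0 < α) (hp : 0 < p) :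
    ∃ C : ℝ, 0 < C ∧ ∀ w : ℂ, w ≠ 0 → ∀ f : ℂ → ℂ,
      DifferentiableOn ℂ f {(0 : ℂ)}ᶜ →
      (∫⁻ z : ℂ, ENNReal.ofReal (‖f z‖ ^ p *
          Real.exp (-(p * α) * (Real.log (‖z‖)) ^ 2))) ≠ ⊤ →
      ‖f w‖ ≤
        C * Real.exp (α * (Real.log (‖w‖)) ^ 2) * ‖w‖ ^ (-(2 / p)) *
          ((∫⁻ z : ℂ, ENNReal.ofReal (‖f z‖ ^ p *
            Real.exp (-(p * α) * (Real.log (‖z‖)) ^ 2))).toReal) ^ (1 / p) := by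
  have hπ := Real.pi_pos
  set B : ℝ := 4 * π ^ 2 with hB
  set Cp : ℝ := (2:ℝ) ^ p + (4:ℝ) ^ (1/p) with hCpdef
  have hCp : 0 < Cp := by positivity
  set C : ℝ := (4 * Cp * Real.exp (p * α * B) / π) ^ (1/p) with hC
  have hCpos : 0 < C := Real.rpow_pos_of_pos (by positivity) _
  refine ⟨C, hCpos, ?_⟩
  intro w hw f hf hI
  set I := ∫⁻ z : ℂ, ENNReal.ofReal (‖f z‖ ^ p *
      Real.exp (-(p * α) * (Real.log (‖z‖)) ^ 2)) with hIdef
  set aw := ‖w‖ with haw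
  have hawpos : 0 < aw := by
    rw [haw]
    exact norm_pos_iff.mpr hw
  set L := Real.log aw with hL
  set R := aw / 2 with hR2
  have hRpos : 0 < R := by positivity
  set U : Set ℂ := {z | 0 < (z / w).re} with hU
  have hUne : ∀ z ∈ U, z ≠ 0 := by
    intro z hz h0
    rw [hU, mem_setOf_eq, h0, zero_div] at hz
    simp at hz
  have hUslit : ∀ z ∈ U, z / w ∈ Complex.slitPlane := fun z hz => Or.inl hz
  have hsubU : Metric.closedBall w R ⊆ U := by
    intro z hz
    rw [Metric.mem_closedBall, dist_eq_norm] at hz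
    have hzw : z / w - 1 = (z - w) / w := by field_simp
    have h1 : ‖z / w - 1‖ ≤ 1 / 2 := by
      rw [hzw, norm_div]
      rw [div_le_iff₀ hawpos]
      calc ‖z - w‖ = ‖z - w‖ := rfl
        _ ≤ R := hz
        _ = 1 / 2 * aw := by rw [hR2]; ring
    have h2 : -(1/2 : ℝ) ≤ (z / w - 1).re := by
      linarith [(abs_le.1 ((Complex.abs_re_le_norm (z/w-1)).trans h1)).1]
    have h4 : (z / w).re = 1 + (z / w - 1).re := by
      simp [Complex.sub_re]
    show 0 < (z / w).re
    rw [h4]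
    linarith
  set l : ℂ → ℂ := fun z => Complex.log w + Complex.log (z / w) with hl
  set g : ℂ → ℂ := fun z => f z * Complex.exp (-(α:ℂ) * (l z) ^ 2) with hg
  have hgd : ∀ z ∈ U, DifferentiableAt ℂ g z := by
    intro z hz
    have h1 : DifferentiableAt ℂ f z :=
      hf.differentiableAt ((isOpen_compl_singleton).mem_nhds (hUne z hz))
    have h2 : DifferentiableAt ℂ (fun z : ℂ => Complex.log (z / w)) z :=
      (differentiableAt_id.div_const w).clog (hUslit z hz)
    have hld : DifferentiableAt ℂ l z := (differentiableAt_const _).add h2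
    exact h1.mul (((hld.pow 2).const_mul _).cexp)
  have hexpl : ∀ z ∈ U, Complex.exp (l z) = z := by
    intro z hz
    rw [hl]
    simp only
    rw [Complex.exp_add, Complex.exp_log hw, Complex.exp_log (div_ne_zero (hUne z hz) hw)]
    field_simp
  have hre : ∀ z ∈ U, (l z).re = Real.log (‖z‖) := by
    intro z hz
    have h := congrArg norm (hexpl z hz)
    rw [Complex.norm_exp] at h
    rw [← h, Real.log_exp]
  have him : ∀ z ∈ U, |(l z).im| ≤ 2 * π := by
    intro z hz
    have h1 : |Complex.arg w| ≤ π := Complex.abs_arg_le_pi w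
    have hz' : 0 < (z / w).re := hz
    have h2 : |Complex.arg (z / w)| ≤ π / 2 :=
      Complex.abs_arg_le_pi_div_two_iff.mpr hz'.le
    have h3 : (l z).im = Complex.arg w + Complex.arg (z / w) := by
      simp only [hl, Complex.add_im, Complex.log_im]
    rw [h3]
    calc |Complex.arg w + Complex.arg (z / w)| ≤ |Complex.arg w| + |Complex.arg (z / w)| :=
          abs_add_le _ _
      _ ≤ π + π / 2 := add_le_add h1 h2
      _ ≤ 2 * π := by linarith
  have habs : ∀ z ∈ U, ‖g z‖
      = ‖f z‖ * Real.exp (α * ((l z).im ^ 2 - (l z).re ^ 2)) := by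
    intro z hz
    rw [hg]
    simp only
    rw [norm_mul, Complex.norm_exp]
    congr 2
    have hcast : (-(α:ℂ)) = ((-α : ℝ) : ℂ) := by push_cast; ring
    rw [hcast, Complex.re_ofReal_mul, pow_two, Complex.mul_re]
    ring
  have hgub : ∀ z ∈ U, ‖g z‖ ^ p ≤ Real.exp (p * α * B) *
      (‖f z‖ ^ p * Real.exp (-(p * α) * (Real.log (‖z‖)) ^ 2)) := by
    intro z hz
    have hfnn : (0:ℝ) ≤ ‖f z‖ := norm_nonneg _
    have h2 : (l z).im ^ 2 ≤ B := by
      rw [hB]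
      have h := him z hz
      nlinarith [abs_nonneg ((l z).im), _root_.sq_abs ((l z).im)]
    have h1 : α * ((l z).im ^ 2 - (l z).re ^ 2) * p
        ≤ p * α * B + -(p * α) * (Real.log (‖z‖)) ^ 2 := by
      rw [← hre z hz]
      have hprod : 0 ≤ p * α * (B - (l z).im ^ 2) :=
        mul_nonneg (by positivity) (sub_nonneg.2 h2)
      nlinarith
    calc ‖g z‖ ^ p
        = ‖f z‖ ^ p * Real.exp (α * ((l z).im ^ 2 - (l z).re ^ 2)) ^ p := by
          rw [habs z hz, Real.mul_rpow hfnn (Real.exp_nonneg _)]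
      _ = ‖f z‖ ^ p * Real.exp (α * ((l z).im ^ 2 - (l z).re ^ 2) * p) := by
          rw [← Real.exp_mul]
      _ ≤ ‖f z‖ ^ p
            * Real.exp (p * α * B + -(p * α) * (Real.log (‖z‖)) ^ 2) := by
          apply mul_le_mul_of_nonneg_left (Real.exp_le_exp.mpr h1) (Real.rpow_nonneg hfnn p)
      _ = Real.exp (p * α * B) *
            (‖f z‖ ^ p * Real.exp (-(p * α) * (Real.log (‖z‖)) ^ 2)) := by
          rw [Real.exp_add]
          ring
  have hwU : w ∈ U := by
    rw [hU, mem_setOf_eq, div_self hw]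
    norm_num
  have hgw : ‖f w‖ * Real.exp (-α * L ^ 2) ≤ ‖g w‖ := by
    rw [habs w hwU]
    apply mul_le_mul_of_nonneg_left (Real.exp_le_exp.mpr ?_) (norm_nonneg _)
    rw [hre w hwU, ← haw, ← hL]
    nlinarith [sq_nonneg ((l w).im), hα.le]
  have hcball : Metric.ball w R ⊆ U := fun z hz => hsubU (Metric.ball_subset_closedBall hz)
  have hgc : ContinuousOn g (Metric.closedBall w R) := fun z hz =>
    ((hgd z (hsubU hz)).continuousAt.continuousWithinAt)
  have hsm := submean hp hRpos hgc (fun z hz => hgd z (hcball hz))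
  have hcompare : (∫⁻ z in Metric.ball w R, ENNReal.ofReal (‖g z‖ ^ p))
      ≤ ENNReal.ofReal (Real.exp (p * α * B)) * I := by
    calc ∫⁻ z in Metric.ball w R, ENNReal.ofReal (‖g z‖ ^ p)
        ≤ ∫⁻ z in Metric.ball w R, ENNReal.ofReal (Real.exp (p * α * B)) *
            ENNReal.ofReal (‖f z‖ ^ p *
              Real.exp (-(p * α) * (Real.log (‖z‖)) ^ 2)) := by
          apply setLIntegral_mono' measurableSet_ball
          intro z hz
          rw [← ENNReal.ofReal_mul (Real.exp_nonneg _)]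
          exact ENNReal.ofReal_le_ofReal (hgub z (hcball hz))
      _ = ENNReal.ofReal (Real.exp (p * α * B)) *
            ∫⁻ z in Metric.ball w R, ENNReal.ofReal (‖f z‖ ^ p *
              Real.exp (-(p * α) * (Real.log (‖z‖)) ^ 2)) :=
          lintegral_const_mul' _ _ ENNReal.ofReal_ne_top
      _ ≤ ENNReal.ofReal (Real.exp (p * α * B)) * I := by
          apply mul_le_mul_right
          rw [hIdef]
          exact setLIntegral_le_lintegral _ _
  have main := hsm.trans (mul_le_mul_right hcompare _)
  have hfin : ENNReal.ofReal Cp * (ENNReal.ofReal (Real.exp (p * α * B)) * I) ≠ ⊤ :=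
    ENNReal.mul_ne_top ENNReal.ofReal_ne_top (ENNReal.mul_ne_top ENNReal.ofReal_ne_top hI)
  have hreal : π * R ^ 2 * ‖g w‖ ^ p ≤ Cp * (Real.exp (p * α * B) * I.toReal) := by
    have h := ENNReal.toReal_mono hfin main
    rw [ENNReal.toReal_ofReal (by positivity)] at h
    rwa [ENNReal.toReal_mul, ENNReal.toReal_mul, ENNReal.toReal_ofReal hCp.le,
      ENNReal.toReal_ofReal (Real.exp_nonneg _)] at h
  have hItrnn : (0:ℝ) ≤ I.toReal := ENNReal.toReal_nonneg
  have habsfw : ‖f w‖ ^ p * Real.exp (-α * L ^ 2) ^ p ≤ ‖g w‖ ^ p := by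
    rw [← Real.mul_rpow (norm_nonneg _) (Real.exp_nonneg _)]
    exact Real.rpow_le_rpow (by positivity) hgw hp.le
  have hkey : π * R ^ 2 * (‖f w‖ ^ p * Real.exp (-(p * α) * L ^ 2))
      ≤ Cp * (Real.exp (p * α * B) * I.toReal) := by
    have he : Real.exp (-α * L ^ 2) ^ p = Real.exp (-(p * α) * L ^ 2) := by
      rw [← Real.exp_mul]
      congr 1
      ring
    refine le_trans ?_ hreal
    rw [← he]
    apply mul_le_mul_of_nonneg_left habsfw (by positivity)
  have hfinal : ‖f w‖ ^ p
      ≤ 4 * Cp * Real.exp (p * α * B) / π * Real.exp (p * α * L ^ 2)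
          * aw ^ (-2:ℝ) * I.toReal := by
    have he2 : Real.exp (-(p * α) * L ^ 2) ≠ 0 := (Real.exp_pos _).ne'
    have he1 : Real.exp (p * α * L ^ 2) = (Real.exp (-(p * α) * L ^ 2))⁻¹ := by
      rw [← Real.exp_neg]
      congr 1
      ring
    have hA : aw ^ (-2:ℝ) = 1 / aw ^ 2 := by
      rw [Real.rpow_neg hawpos.le, one_div]
      congr 1
      rw [show ((2:ℝ)) = ((2:ℕ):ℝ) by norm_num, Real.rpow_natCast]
    have hpos : 0 < Real.exp (-(p * α) * L ^ 2) * (π * R ^ 2) := by positivity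
    rw [← mul_le_mul_iff_of_pos_right hpos]
    have hX : 4 * Cp * Real.exp (p * α * B) / π * Real.exp (p * α * L ^ 2)
          * aw ^ (-2:ℝ) * I.toReal * (Real.exp (-(p * α) * L ^ 2) * (π * R ^ 2))
        = Cp * (Real.exp (p * α * B) * I.toReal) := by
      rw [hA, he1, hR2]
      field_simp
      ring
    rw [hX]
    calc ‖f w‖ ^ p * (Real.exp (-(p * α) * L ^ 2) * (π * R ^ 2))
        = π * R ^ 2 * (‖f w‖ ^ p * Real.exp (-(p * α) * L ^ 2)) := by ring
      _ ≤ _ := hkey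
  -- take p-th roots
  have hRHSnn : (0:ℝ) ≤ C * Real.exp (α * L ^ 2) * aw ^ (-(2 / p)) * I.toReal ^ (1 / p) := by
    positivity
  have hpow : (C * Real.exp (α * L ^ 2) * aw ^ (-(2 / p)) * I.toReal ^ (1 / p)) ^ p
      = 4 * Cp * Real.exp (p * α * B) / π * Real.exp (p * α * L ^ 2)
          * aw ^ (-2:ℝ) * I.toReal := by
    rw [Real.mul_rpow (by positivity) (Real.rpow_nonneg hItrnn _),
      Real.mul_rpow (by positivity) (Real.rpow_nonneg hawpos.le _),
      Real.mul_rpow (by positivity) (Real.exp_nonneg _)]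
    have e1 : C ^ p = 4 * Cp * Real.exp (p * α * B) / π := by
      rw [hC, ← Real.rpow_mul (by positivity), one_div, inv_mul_cancel₀ hp.ne', Real.rpow_one]
    have e2 : Real.exp (α * L ^ 2) ^ p = Real.exp (p * α * L ^ 2) := by
      rw [← Real.exp_mul]
      congr 1
      ring
    have e3 : (aw ^ (-(2 / p) : ℝ)) ^ p = aw ^ (-2:ℝ) := by
      rw [← Real.rpow_mul hawpos.le]
      congr 1
      field_simp
    have e4 : (I.toReal ^ ((1:ℝ) / p)) ^ p = I.toReal := by
      rw [← Real.rpow_mul hItrnn, one_div, inv_mul_cancel₀ hp.ne', Real.rpow_one]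
    rw [e1, e2, e3, e4]
  have hfw : ‖f w‖
      ≤ C * Real.exp (α * L ^ 2) * aw ^ (-(2 / p)) * I.toReal ^ (1 / p) := by
    have habsnn : (0:ℝ) ≤ ‖f w‖ := norm_nonneg _
    calc ‖f w‖ = (‖f w‖ ^ p) ^ (1 / p) := by
          rw [← Real.rpow_mul habsnn, mul_one_div, div_self hp.ne', Real.rpow_one]
      _ ≤ ((C * Real.exp (α * L ^ 2) * aw ^ (-(2 / p)) * I.toReal ^ (1 / p)) ^ p) ^ (1 / p) := by
          apply Real.rpow_le_rpow (Real.rpow_nonneg habsnn p) _ (by positivity)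
          rw [hpow]
          exact hfinal
      _ = C * Real.exp (α * L ^ 2) * aw ^ (-(2 / p)) * I.toReal ^ (1 / p) := by
          rw [← Real.rpow_mul hRHSnn, mul_one_div, div_self hp.ne', Real.rpow_one]
  exact hfw
end

section
/- Zero-counting estimate: let α, ε > 0 and suppose L ⊂ ℝ × [−π, π) has the property that every strip (x, x+l) × [−π, π) contains at least (2α + ε)l points of L for some fixed l > 0. Let Λ̃ ⊂ ℂ be the 2πi-periodic lift {u + 2πik : (Re u, Im u) ∈ L translated appropriately, k ∈ ℤ}, and let n(t) = #(Λ̃ ∩ tD). Then there exists C > 0 such that n(t) ≥ (2α + ε)(t²/2 − Ct) for all t ≥ 0. -/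
open Complex Set Metric


lemma half_circle_integral {t : ℝ} (ht : 0 ≤ t) :
    ∫ x in (0:ℝ)..t, Real.sqrt (t^2 - x^2) = Real.pi * t^2 / 4 := by
  have h01 : ∫ x in (0:ℝ)..1, Real.sqrt (1 - x^2) = Real.pi / 4 := by
    have h := integral_sqrt_one_sub_sq
    have hneg : ∫ x in (0:ℝ)..1, Real.sqrt (1 - x^2) = ∫ x in (-1:ℝ)..0, Real.sqrt (1 - x^2) := by
      have := intervalIntegral.integral_comp_neg (a := (0:ℝ)) (b := 1)
        (fun x => Real.sqrt (1 - x^2))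
      simpa using this
    have hsplit : ∫ x in (-1:ℝ)..1, Real.sqrt (1 - x^2)
        = (∫ x in (-1:ℝ)..0, Real.sqrt (1 - x^2)) + ∫ x in (0:ℝ)..1, Real.sqrt (1 - x^2) := by
      rw [intervalIntegral.integral_add_adjacent_intervals] <;>
        exact (Real.continuous_sqrt.comp (by continuity)).intervalIntegrable _ _
    rw [hsplit, ← hneg] at h
    linarith
  rcases eq_or_lt_of_le ht with h0 | h0
  · simp [← h0]
  · have hscale := intervalIntegral.smul_integral_comp_mul_left
      (a := (0:ℝ)) (b := 1) (fun x => Real.sqrt (t^2 - x^2)) t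
    simp only [mul_zero, mul_one, smul_eq_mul] at hscale
    rw [← hscale]
    have : ∀ x : ℝ, Real.sqrt (t^2 - (t*x)^2) = t * Real.sqrt (1 - x^2) := by
      intro x
      rw [show t^2 - (t*x)^2 = t^2 * (1 - x^2) by ring, Real.sqrt_mul (sq_nonneg t),
        Real.sqrt_sq ht]
    simp only [this]
    rw [intervalIntegral.integral_const_mul, h01]
    ring

lemma riemann_lower {t l : ℝ} (hl : 0 < l) (ht : 0 ≤ t) (N : ℕ) (hN : t ≤ (N:ℝ) * l) :
    Real.pi * t^2 / 4 - l * t ≤ ∑ i ∈ Finset.Icc 1 N, l * Real.sqrt (t^2 - ((i:ℝ)*l)^2) := by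
  set f : ℝ → ℝ := fun x => Real.sqrt (t^2 - x^2) with hf
  have hcont : Continuous f := Real.continuous_sqrt.comp (by continuity)
  have hint : ∀ a b : ℝ, IntervalIntegrable f MeasureTheory.volume a b :=
    fun a b => hcont.intervalIntegrable a b
  have hnonneg : ∀ x, 0 ≤ f x := fun x => Real.sqrt_nonneg _
  -- step 1 : per-interval bound
  have step1 : ∀ i : ℕ, 1 ≤ i → ∫ x in ((i:ℝ)*l)..(((i:ℝ)+1)*l), f x ≤ l * f ((i:ℝ)*l) := by
    intro i hi
    have hle : (i:ℝ)*l ≤ ((i:ℝ)+1)*l := by nlinarith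
    have : ∫ x in ((i:ℝ)*l)..(((i:ℝ)+1)*l), f x
        ≤ ∫ x in ((i:ℝ)*l)..(((i:ℝ)+1)*l), f ((i:ℝ)*l) := by
      apply intervalIntegral.integral_mono_on hle (hint _ _)
        (intervalIntegrable_const)
      intro x hx
      apply Real.sqrt_le_sqrt
      have h1 : (i:ℝ)*l ≤ x := hx.1
      have h2 : 0 ≤ (i:ℝ)*l := by positivity
      nlinarith
    have hc : ∫ x in ((i:ℝ)*l)..(((i:ℝ)+1)*l), f ((i:ℝ)*l) = l * f ((i:ℝ)*l) := by
      rw [intervalIntegral.integral_const, smul_eq_mul]; ring_nf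
    exact this.trans hc.le
  -- step 2 : sum of adjacent integrals
  have step2 : ∑ i ∈ Finset.range N, ∫ x in (((i:ℝ)+1)*l)..(((i:ℝ)+1+1)*l), f x
      = ∫ x in (1*l)..(((N:ℝ)+1)*l), f x := by
    have := intervalIntegral.sum_integral_adjacent_intervals
      (a := fun i : ℕ => ((i:ℝ)+1)*l) (n := N) (f := f) (fun k _ => hint _ _)
    simpa using this
  -- step 3,4,5 : integral bounds
  have hNl : t ≤ ((N:ℝ)+1)*l := by nlinarith
  have step3 : ∫ x in (1*l)..(((N:ℝ)+1)*l), f x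
      = (∫ x in (0:ℝ)..(((N:ℝ)+1)*l), f x) - ∫ x in (0:ℝ)..(1*l), f x := by
    rw [eq_sub_iff_add_eq, add_comm, intervalIntegral.integral_add_adjacent_intervals (hint _ _) (hint _ _)]
  have step4 : ∫ x in (0:ℝ)..t, f x ≤ ∫ x in (0:ℝ)..(((N:ℝ)+1)*l), f x := by
    have hsplit : ∫ x in (0:ℝ)..(((N:ℝ)+1)*l), f x
        = (∫ x in (0:ℝ)..t, f x) + ∫ x in t..(((N:ℝ)+1)*l), f x :=
      (intervalIntegral.integral_add_adjacent_intervals (hint _ _) (hint _ _)).symm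
    have hpos : 0 ≤ ∫ x in t..(((N:ℝ)+1)*l), f x :=
      intervalIntegral.integral_nonneg hNl (fun x _ => hnonneg x)
    linarith
  have step5 : ∫ x in (0:ℝ)..(1*l), f x ≤ l * t := by
    have : ∫ x in (0:ℝ)..(1*l), f x ≤ ∫ x in (0:ℝ)..(1*l), t := by
      apply intervalIntegral.integral_mono_on (by linarith) (hint _ _) intervalIntegrable_const
      intro x _
      calc f x ≤ Real.sqrt (t^2) := Real.sqrt_le_sqrt (by nlinarith)
        _ = t := Real.sqrt_sq ht
    simpa [smul_eq_mul, mul_comm] using this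
  -- combine
  have hsum : ∑ i ∈ Finset.Icc 1 N, l * f ((i:ℝ)*l)
      = ∑ i ∈ Finset.range N, l * f (((i:ℝ)+1)*l) := by
    rw [← Finset.Ico_add_one_right_eq_Icc, Finset.sum_Ico_eq_sum_range]
    simp [add_comm]
  have hchain : ∫ x in (1*l)..(((N:ℝ)+1)*l), f x ≤ ∑ i ∈ Finset.Icc 1 N, l * f ((i:ℝ)*l) := by
    rw [hsum, ← step2]
    apply Finset.sum_le_sum
    intro i _
    have := step1 (i+1) (Nat.le_add_left 1 i)
    push_cast at this ⊢
    convert this using 2 <;> ring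
  have hval := half_circle_integral ht
  simp only [hf] at *
  nlinarith [step3, step4, step5, hchain, hval]

lemma per_int (Λ : Set ℂ) (hper : ∀ z, z ∈ Λ ↔ z + 2*Real.pi*Complex.I ∈ Λ) :
    ∀ (k : ℤ) (z : ℂ), z ∈ Λ → z + (((2*Real.pi*(k:ℝ) : ℝ)) : ℂ) * Complex.I ∈ Λ := by
  intro k
  induction k using Int.induction_on with
  | zero => simp
  | succ n ih =>
      intro z hz
      have h2 := (hper _).1 (ih z hz)
      have he : z + (((2*Real.pi*((n:ℤ):ℝ) : ℝ)) : ℂ) * Complex.I + 2*Real.pi*Complex.I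
          = z + (((2*Real.pi*(((n:ℤ)+1:ℤ):ℝ) : ℝ)) : ℂ) * Complex.I := by
        push_cast; ring
      rwa [he] at h2
  | pred n ih =>
      intro z hz
      apply (hper _).2
      have he : z + (((2*Real.pi*((-(n:ℤ)-1:ℤ):ℝ) : ℝ)) : ℂ) * Complex.I + 2*Real.pi*Complex.I
          = z + (((2*Real.pi*((-(n:ℤ):ℤ):ℝ) : ℝ)) : ℂ) * Complex.I := by
        push_cast; ring
      rw [he]
      exact ih z hz


set_option maxHeartbeats 1000000 in
theorem stmt18 (α ε l : ℝ) (hα : 0 < α) (hε : 0 < ε) (hl : 0 < l)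
    (Λ : Set ℂ)
    (hper : ∀ z : ℂ, z ∈ Λ ↔ z + 2 * Real.pi * Complex.I ∈ Λ)
    (hfin : ∀ t : ℝ, (Λ ∩ Metric.closedBall (0 : ℂ) t).Finite)
    (hstrip : ∀ x : ℝ,
      (2 * α + ε) * l ≤
        (Set.ncard {z ∈ Λ | x < z.re ∧ z.re < x + l ∧
          -Real.pi ≤ z.im ∧ z.im < Real.pi} : ℝ)) :
    ∃ C : ℝ, 0 < C ∧ ∀ t : ℝ, 0 ≤ t →
      (2 * α + ε) * (t ^ 2 / 2 - C * t) ≤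
        (Set.ncard (Λ ∩ Metric.closedBall (0 : ℂ) t) : ℝ) := by
  classical
  have hπ := Real.pi_pos
  have hπ2 : (2:ℝ) ≤ Real.pi := by linarith [Real.pi_gt_three]
  refine ⟨5*l + 5, by positivity, ?_⟩
  intro t ht
  have hcast : (0:ℝ) ≤ ((Λ ∩ Metric.closedBall (0:ℂ) t).ncard : ℝ) := Nat.cast_nonneg _
  rcases lt_or_ge t 1 with ht1 | ht1
  · have h0 : t^2 ≤ t := by nlinarith
    have h1 : t^2/2 - (5*l+5)*t ≤ 0 := by nlinarith
    have h2 : (0:ℝ) ≤ 2*α+ε := by linarith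
    have := mul_nonpos_of_nonneg_of_nonpos h2 h1
    linarith
  -- main case : t ≥ 1
  set f : ℝ → ℝ := fun x => Real.sqrt (t^2 - x^2) with hfdef
  set N : ℕ := ⌈t / l⌉₊ with hNdef
  have htN : t ≤ (N:ℝ) * l := by
    have h1 : t/l ≤ (N:ℝ) := Nat.le_ceil (t/l)
    calc t = (t/l)*l := by field_simp
      _ ≤ (N:ℝ)*l := mul_le_mul_of_nonneg_right h1 hl.le
  have hNle : (N:ℝ) * l ≤ t + l := by
    have h1 : (N:ℝ) < t/l + 1 := by
      apply Nat.ceil_lt_add_one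
      positivity
    have h2 : (N:ℝ)*l ≤ (t/l+1)*l := by nlinarith
    calc (N:ℝ)*l ≤ (t/l+1)*l := h2
      _ = t + l := by field_simp
  set R : ℤ → ℝ := fun j => l * max ((j:ℝ)+1) (-(j:ℝ)) with hRdef
  set m : ℤ → ℤ := fun j => ⌊(f (R j) - Real.pi)/(2*Real.pi)⌋ with hmdef
  set K : ℤ → Finset ℤ := fun j => Finset.Icc (-(m j)) (m j) with hKdef
  set T : Finset ℂ := (hfin t).toFinset with hTdef
  set F : ℤ → ℤ → Finset ℂ := fun j k => T.filter (fun z =>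
      (j:ℝ)*l < z.re ∧ z.re < ((j:ℝ)+1)*l ∧
      -Real.pi + 2*Real.pi*(k:ℝ) ≤ z.im ∧ z.im < Real.pi + 2*Real.pi*(k:ℝ)) with hFdef
  set J : Finset ℤ := ((Finset.Icc 1 N).image (fun i : ℕ => (i:ℤ) - 1)) ∪
      ((Finset.Icc 1 N).image (fun i : ℕ => -(i:ℤ))) with hJdef
  -- each cell contains many points
  have hcard : ∀ j : ℤ, ∀ k ∈ K j, (2*α+ε)*l ≤ ((F j k).card : ℝ) := by
    intro j k hk
    simp only [hKdef] at hk
    simp only [Finset.mem_Icc] at hk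
    have hm0 : 0 ≤ m j := by omega
    set c : ℂ := (((2*Real.pi*(k:ℝ) : ℝ)) : ℂ) * Complex.I with hcdef
    have hcre : ∀ z : ℂ, (z + c).re = z.re := by
      intro z; simp [hcdef]
    have hcim : ∀ z : ℂ, (z + c).im = z.im + 2*Real.pi*(k:ℝ) := by
      intro z; simp [hcdef]
    set S₀ : Set ℂ := {z ∈ Λ | (j:ℝ)*l < z.re ∧ z.re < (j:ℝ)*l + l ∧
      -Real.pi ≤ z.im ∧ z.im < Real.pi} with hS₀def
    have hS := hstrip ((j:ℝ)*l)
    -- floor facts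
    have hfl : Real.pi + 2*Real.pi*((m j):ℝ) ≤ f (R j) := by
      have h1 : ((m j):ℝ) ≤ (f (R j) - Real.pi)/(2*Real.pi) := by
        simp only [hmdef]; exact Int.floor_le _
      have h2 : ((m j):ℝ) * (2*Real.pi) ≤ f (R j) - Real.pi := by
        rw [← le_div_iff₀ (by positivity)]; exact h1
      linarith
    have hMpos : (0:ℝ) < Real.pi + 2*Real.pi*((m j):ℝ) := by
      have : (0:ℝ) ≤ ((m j):ℝ) := by exact_mod_cast hm0
      nlinarith
    have hfpos : 0 < f (R j) := lt_of_lt_of_le hMpos hfl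
    have hargpos : 0 < t^2 - (R j)^2 := by
      rw [hfdef] at hfpos; exact Real.sqrt_pos.mp hfpos
    have hsq : f (R j)^2 = t^2 - (R j)^2 := by
      rw [hfdef]; exact Real.sq_sqrt hargpos.le
    have himsub : (fun z => z + c) '' S₀ ⊆ ↑(F j k) := by
      rintro w ⟨z, hz, rfl⟩
      obtain ⟨hzΛ, h1, h2, h3, h4⟩ := hz
      have hkr : (k:ℝ) ≤ ((m j):ℝ) := by exact_mod_cast hk.2
      have hkl : -((m j):ℝ) ≤ (k:ℝ) := by exact_mod_cast hk.1
      -- real part bound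
      have hre1 : z.re ≤ R j := by
        simp only [hRdef]
        have : ((j:ℝ)+1) ≤ max ((j:ℝ)+1) (-(j:ℝ)) := le_max_left _ _
        nlinarith
      have hre2 : -(R j) ≤ z.re := by
        simp only [hRdef]
        have : (-(j:ℝ)) ≤ max ((j:ℝ)+1) (-(j:ℝ)) := le_max_right _ _
        nlinarith
      have hresq : z.re^2 ≤ (R j)^2 := sq_le_sq' hre2 hre1
      -- imaginary part bound
      have him1 : z.im + 2*Real.pi*(k:ℝ) ≤ Real.pi + 2*Real.pi*((m j):ℝ) := by nlinarith
      have him2 : -(Real.pi + 2*Real.pi*((m j):ℝ)) ≤ z.im + 2*Real.pi*(k:ℝ) := by nlinarith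
      have himsq : (z.im + 2*Real.pi*(k:ℝ))^2 ≤ (Real.pi + 2*Real.pi*((m j):ℝ))^2 :=
        sq_le_sq' him2 him1
      have himsq2 : (z.im + 2*Real.pi*(k:ℝ))^2 ≤ f (R j)^2 := by nlinarith
      -- in the ball
      have habs : ‖z + c‖ ≤ t := by
        rw [Complex.norm_def, Complex.normSq_apply, hcre, hcim]
        have hb : z.re * z.re + (z.im + 2*Real.pi*(k:ℝ)) * (z.im + 2*Real.pi*(k:ℝ)) ≤ t^2 := by
          nlinarith
        calc Real.sqrt (z.re * z.re + (z.im + 2*Real.pi*(k:ℝ)) * (z.im + 2*Real.pi*(k:ℝ)))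
            ≤ Real.sqrt (t^2) := Real.sqrt_le_sqrt hb
          _ = t := Real.sqrt_sq ht
      have hmem : z + c ∈ T := by
        simp only [hTdef, Set.Finite.mem_toFinset]
        refine ⟨per_int Λ hper k z hzΛ, ?_⟩
        rw [Metric.mem_closedBall, Complex.dist_eq, sub_zero]
        exact habs
      simp only [hFdef]
      simp only [Finset.coe_filter, Set.mem_setOf_eq]
      refine ⟨hmem, ?_, ?_, ?_, ?_⟩
      · rw [hcre]; exact h1
      · rw [hcre]; nlinarith
      · rw [hcim]; linarith
      · rw [hcim]; linarith
    have hinj : Set.InjOn (fun z => z + c) S₀ := (add_left_injective c).injOn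
    have hn1 : S₀.ncard = ((fun z => z + c) '' S₀).ncard := (Set.ncard_image_of_injOn hinj).symm
    have hn2 : ((fun z => z + c) '' S₀).ncard ≤ (↑(F j k) : Set ℂ).ncard :=
      Set.ncard_le_ncard himsub (F j k).finite_toSet
    have hn3 : (↑(F j k) : Set ℂ).ncard = (F j k).card := Set.ncard_coe_finset _
    have : S₀.ncard ≤ (F j k).card := by omega
    calc (2*α+ε)*l ≤ (S₀.ncard : ℝ) := hS
      _ ≤ ((F j k).card : ℝ) := by exact_mod_cast this
  -- cells are disjoint, all inside T
  have hsum1 : ∑ j ∈ J, ∑ k ∈ K j, ((F j k).card : ℝ) ≤ (T.card : ℝ) := by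
    set P : Finset ((_ : ℤ) × ℤ) := J.sigma (fun j => K j) with hPdef
    have hdisj : ∀ p ∈ P, ∀ q ∈ P, p ≠ q → Disjoint (F p.1 p.2) (F q.1 q.2) := by
      rintro ⟨j, k⟩ _ ⟨j', k'⟩ _ hne
      rw [Finset.disjoint_left]
      intro z hz hz'
      simp only [hFdef, Finset.mem_filter] at hz hz'
      obtain ⟨-, ha1, ha2, ha3, ha4⟩ := hz
      obtain ⟨-, hb1, hb2, hb3, hb4⟩ := hz'
      apply hne
      have hjj : j = j' := by
        have c1 : (j:ℝ) < (j':ℝ) + 1 := by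
          have : (j:ℝ)*l < ((j':ℝ)+1)*l := lt_trans ha1 hb2
          exact lt_of_mul_lt_mul_right this hl.le
        have c2 : (j':ℝ) < (j:ℝ) + 1 := by
          have : (j':ℝ)*l < ((j:ℝ)+1)*l := lt_trans hb1 ha2
          exact lt_of_mul_lt_mul_right this hl.le
        have d1 : j < j' + 1 := by exact_mod_cast c1
        have d2 : j' < j + 1 := by exact_mod_cast c2
        omega
      have hkk : k = k' := by
        have hπ' : (0:ℝ) < 2*Real.pi := by linarith
        have c1 : (k:ℝ) < (k':ℝ) + 1 := by
          have h2 : 2*Real.pi*(k:ℝ) < 2*Real.pi*((k':ℝ)+1) := by linarith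
          exact lt_of_mul_lt_mul_left h2 hπ'.le
        have c2 : (k':ℝ) < (k:ℝ) + 1 := by
          have h2 : 2*Real.pi*(k':ℝ) < 2*Real.pi*((k:ℝ)+1) := by linarith
          exact lt_of_mul_lt_mul_left h2 hπ'.le
        have d1 : k < k' + 1 := by exact_mod_cast c1
        have d2 : k' < k + 1 := by exact_mod_cast c2
        omega
      simp [hjj, hkk]
    have hunion : ∑ p ∈ P, (F p.1 p.2).card = (P.biUnion (fun p => F p.1 p.2)).card :=
      (Finset.card_biUnion hdisj).symm
    have hsub : P.biUnion (fun p => F p.1 p.2) ⊆ T := by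
      apply Finset.biUnion_subset.mpr
      intro p _
      simp only [hFdef]
      exact Finset.filter_subset _ _
    have hle : ∑ p ∈ P, (F p.1 p.2).card ≤ T.card := by
      rw [hunion]; exact Finset.card_le_card hsub
    have hsig : ∑ p ∈ P, (F p.1 p.2).card = ∑ j ∈ J, ∑ k ∈ K j, (F j k).card := by
      rw [hPdef, Finset.sum_sigma]
    rw [hsig] at hle
    calc ∑ j ∈ J, ∑ k ∈ K j, ((F j k).card : ℝ)
        = ((∑ j ∈ J, ∑ k ∈ K j, (F j k).card : ℕ) : ℝ) := by push_cast; rfl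
      _ ≤ (T.card : ℝ) := by exact_mod_cast hle
  -- size of K j
  have hKcard : ∀ j : ℤ, f (R j)/Real.pi - 2 ≤ ((K j).card : ℝ) := by
    intro j
    have hcardK : (K j).card = (2*(m j)+1).toNat := by
      simp only [hKdef]
      rw [Int.card_Icc]
      congr 1
      ring
    by_cases h : 0 ≤ m j
    · have hcast2 : ((K j).card : ℝ) = 2*((m j):ℝ)+1 := by
        rw [hcardK]
        have h1 : ((2*(m j)+1).toNat : ℤ) = 2*(m j)+1 := Int.toNat_of_nonneg (by omega)
        have h2 : (((2*(m j)+1).toNat : ℤ) : ℝ) = ((2*(m j)+1 : ℤ) : ℝ) := by rw [h1]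
        push_cast at h2 ⊢
        linarith
      rw [hcast2]
      have hfl : (f (R j) - Real.pi)/(2*Real.pi) - 1 < ((m j):ℝ) := by
        simp only [hmdef]; exact Int.sub_one_lt_floor _
      have h3 : f (R j) - Real.pi < (((m j):ℝ) + 1) * (2*Real.pi) := by
        rw [← div_lt_iff₀ (by positivity)]
        linarith
      rw [div_sub' (ne_of_gt hπ), div_le_iff₀ hπ]
      nlinarith
    · have hempty : (K j).card = 0 := by
        rw [hcardK]
        omega
      rw [hempty]
      have hm1 : m j ≤ -1 := by omega
      have hneg : (f (R j) - Real.pi)/(2*Real.pi) < 0 := by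
        by_contra hcon
        push_neg at hcon
        have : 0 ≤ m j := by
          simp only [hmdef]; exact Int.floor_nonneg.mpr hcon
        omega
      have : f (R j) < Real.pi := by
        by_contra hcon
        push_neg at hcon
        have : 0 ≤ (f (R j) - Real.pi)/(2*Real.pi) :=
          div_nonneg (by linarith) (by positivity)
        linarith
      have h4 : f (R j)/Real.pi < 1 := by
        rw [div_lt_one hπ]; linarith
      norm_num
      linarith
  -- sum over J of f (R j)
  have hJsum : 2 * ∑ i ∈ Finset.Icc 1 N, f ((i:ℝ)*l) ≤ ∑ j ∈ J, f (R j) := by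
    have hdisjAB : Disjoint ((Finset.Icc 1 N).image (fun i : ℕ => (i:ℤ) - 1))
        ((Finset.Icc 1 N).image (fun i : ℕ => -(i:ℤ))) := by
      rw [Finset.disjoint_left]
      intro a ha hb
      simp only [Finset.mem_image, Finset.mem_Icc] at ha hb
      obtain ⟨i, ⟨hi1, -⟩, rfl⟩ := ha
      obtain ⟨i', ⟨hi'1, -⟩, heq⟩ := hb
      omega
    simp only [hJdef]
    rw [Finset.sum_union hdisjAB,
      Finset.sum_image (g := fun i : ℕ => (i:ℤ) - 1) (by intro a _ b _ h; simp only at h; omega),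
      Finset.sum_image (g := fun i : ℕ => -(i:ℤ)) (by intro a _ b _ h; simp only at h; omega)]
    have e1 : ∀ i ∈ Finset.Icc 1 N, f (R ((i:ℤ) - 1)) = f ((i:ℝ)*l) := by
      intro i hi
      simp only [Finset.mem_Icc] at hi
      have hi1 : (1:ℝ) ≤ (i:ℝ) := by exact_mod_cast hi.1
      congr 1
      simp only [hRdef]
      push_cast
      rw [max_eq_left (by linarith)]
      ring
    have e2 : ∀ i ∈ Finset.Icc 1 N, f (R (-(i:ℤ))) = f ((i:ℝ)*l) := by
      intro i hi
      simp only [Finset.mem_Icc] at hi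
      have hi1 : (1:ℝ) ≤ (i:ℝ) := by exact_mod_cast hi.1
      congr 1
      simp only [hRdef]
      push_cast
      rw [max_eq_right (by linarith)]
      ring
    rw [Finset.sum_congr rfl e1, Finset.sum_congr rfl e2]
    linarith
  have hJcard : (J.card : ℝ) ≤ 2*N := by
    have h1 : J.card ≤ N + N := by
      simp only [hJdef]
      calc (((Finset.Icc 1 N).image (fun i : ℕ => (i:ℤ) - 1)) ∪
            ((Finset.Icc 1 N).image (fun i : ℕ => -(i:ℤ)))).card
          ≤ ((Finset.Icc 1 N).image (fun i : ℕ => (i:ℤ) - 1)).card +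
            ((Finset.Icc 1 N).image (fun i : ℕ => -(i:ℤ))).card := Finset.card_union_le _ _
        _ ≤ (Finset.Icc 1 N).card + (Finset.Icc 1 N).card :=
            add_le_add Finset.card_image_le Finset.card_image_le
        _ = N + N := by rw [Nat.card_Icc]; omega
    have : (J.card : ℝ) ≤ ((N + N : ℕ) : ℝ) := by exact_mod_cast h1
    push_cast at this
    linarith
  -- Riemann bound
  have hriem : Real.pi * t^2/4 - l*t ≤ ∑ i ∈ Finset.Icc 1 N, l * f ((i:ℝ)*l) :=
    riemann_lower hl ht N htN
  -- put it together
  have hTcard : ((Λ ∩ Metric.closedBall (0:ℂ) t).ncard : ℝ) = (T.card : ℝ) := by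
    rw [hTdef, Set.ncard_eq_toFinset_card _ (hfin t)]
  have hmid : (2*α+ε)*l * ∑ j ∈ J, ((K j).card : ℝ) ≤ ∑ j ∈ J, ∑ k ∈ K j, ((F j k).card : ℝ) := by
    rw [Finset.mul_sum]
    apply Finset.sum_le_sum
    intro j _
    calc (2*α+ε)*l * ((K j).card : ℝ) = ∑ k ∈ K j, (2*α+ε)*l := by
          rw [Finset.sum_const, nsmul_eq_mul]; ring
      _ ≤ ∑ k ∈ K j, ((F j k).card : ℝ) := Finset.sum_le_sum (fun k hk => hcard j k hk)
  have hKsum : (1/Real.pi) * (2 * ∑ i ∈ Finset.Icc 1 N, f ((i:ℝ)*l)) - 2*(2*N)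
      ≤ ∑ j ∈ J, ((K j).card : ℝ) := by
    have h1 : ∑ j ∈ J, (f (R j)/Real.pi - 2) ≤ ∑ j ∈ J, ((K j).card : ℝ) :=
      Finset.sum_le_sum (fun j _ => hKcard j)
    have h2 : ∑ j ∈ J, (f (R j)/Real.pi - 2)
        = (1/Real.pi) * (∑ j ∈ J, f (R j)) - 2*(J.card : ℝ) := by
      rw [Finset.sum_sub_distrib, Finset.sum_const, Finset.mul_sum, nsmul_eq_mul]
      congr 1
      · exact Finset.sum_congr rfl (fun j _ => by ring)
      · ring
    have h3 : (1/Real.pi) * (2 * ∑ i ∈ Finset.Icc 1 N, f ((i:ℝ)*l))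
        ≤ (1/Real.pi) * (∑ j ∈ J, f (R j)) := by
      apply mul_le_mul_of_nonneg_left hJsum (by positivity)
    linarith
  have hsumf : Real.pi * t^2/4 - l*t ≤ l * ∑ i ∈ Finset.Icc 1 N, f ((i:ℝ)*l) := by
    rw [Finset.mul_sum]; exact hriem
  -- final arithmetic
  rw [hTcard] at hcast ⊢
  have hfinal : (2*α+ε) * (t^2/2 - (5*l+5)*t)
      ≤ (2*α+ε)*l * ∑ j ∈ J, ((K j).card : ℝ) := by
    have hsnn : 0 ≤ ∑ i ∈ Finset.Icc 1 N, f ((i:ℝ)*l) :=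
      Finset.sum_nonneg (fun i _ => Real.sqrt_nonneg _)
    have hNl : (N:ℝ)*l ≤ t + l*t := by nlinarith
    have hkey : t^2/2 - (5*l+5)*t ≤ l * ((1/Real.pi) * (2 * ∑ i ∈ Finset.Icc 1 N, f ((i:ℝ)*l)) - 2*(2*N)) := by
      have e1 : l * ((1/Real.pi) * (2 * ∑ i ∈ Finset.Icc 1 N, f ((i:ℝ)*l)) - 2*(2*N))
          = (2/Real.pi) * (l * ∑ i ∈ Finset.Icc 1 N, f ((i:ℝ)*l)) - 4*((N:ℝ)*l) := by
        ring
      rw [e1]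
      have e2 : (2/Real.pi) * (Real.pi * t^2/4 - l*t)
          ≤ (2/Real.pi) * (l * ∑ i ∈ Finset.Icc 1 N, f ((i:ℝ)*l)) :=
        mul_le_mul_of_nonneg_left hsumf (by positivity)
      have e3 : (2/Real.pi) * (Real.pi * t^2/4 - l*t) = t^2/2 - (2/Real.pi)*(l*t) := by
        field_simp; ring
      have e4 : (2/Real.pi)*(l*t) ≤ l*t := by
        have : (2/Real.pi) ≤ 1 := by
          rw [div_le_one hπ]; exact hπ2
        nlinarith [mul_nonneg hl.le ht]
      nlinarith
    have hmono : l * ((1/Real.pi) * (2 * ∑ i ∈ Finset.Icc 1 N, f ((i:ℝ)*l)) - 2*(2*N))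
        ≤ l * ∑ j ∈ J, ((K j).card : ℝ) := mul_le_mul_of_nonneg_left hKsum hl.le
    have h5 : (0:ℝ) < 2*α+ε := by linarith
    calc (2*α+ε) * (t^2/2 - (5*l+5)*t) ≤ (2*α+ε) * (l * ∑ j ∈ J, ((K j).card : ℝ)) :=
          mul_le_mul_of_nonneg_left (hkey.trans hmono) h5.le
      _ = (2*α+ε)*l * ∑ j ∈ J, ((K j).card : ℝ) := by ring
  linarith
end
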